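/- arXiv:1112.3003 — 8 statements merged into one kernel-verified Lean document; each statement's English description precedes it below -/
import Mathlib

section
/- Let A be a positive definite n×n complex matrix and 0 ≤ r ≤ 1. Then A^r + A^(-r) ≤ A + A^(-1) in the Loewner order (i.e., (A + A^(-1)) - (A^r + A^(-r)) is positive semidefinite). -/
open Matrix Finset
open scoped ComplexOrder

/-- Real power of a matrix via the spectral decomposition (junk value if not Hermitian). -/
noncomputable def mrpow {l : Type*} [Fintype l] [DecidableEq l] (A : Matrix l l ℂ) (r : ℝ) :
    Matrix l l ℂ :=
  if hA : A.IsHermitian then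
    (hA.eigenvectorUnitary : Matrix l l ℂ) *
      Matrix.diagonal (fun i => ((hA.eigenvalues i ^ r : ℝ) : ℂ)) *
      (star hA.eigenvectorUnitary : Matrix l l ℂ)
  else A

/-- Weighted matrix geometric mean `A ♯ₜ B = A^(1/2) (A^(-1/2) B A^(-1/2))^t A^(1/2)`. -/
noncomputable def wgmean {l : Type*} [Fintype l] [DecidableEq l] (A B : Matrix l l ℂ) (t : ℝ) :
    Matrix l l ℂ :=
  mrpow A (1/2) * mrpow (mrpow A (-(1/2)) * B * mrpow A (-(1/2))) t * mrpow A (1/2)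

/-- Loewner order: `A ≤ B` iff `B - A` is positive semidefinite. -/
def loewnerLE {l : Type*} [Fintype l] [DecidableEq l] (A B : Matrix l l ℂ) : Prop :=
  (B - A).PosSemidef

private lemma scalar_key {x : ℝ} (hx : 0 < x) {r : ℝ} (hr0 : 0 ≤ r) (hr1 : r ≤ 1) :
    x ^ r + x ^ (-r) ≤ x + x ^ (-1 : ℝ) := by
  obtain ⟨L, rfl⟩ : ∃ L, x = Real.exp L := ⟨Real.log x, (Real.exp_log hx).symm⟩
  simp only [Real.rpow_def_of_pos (Real.exp_pos L), Real.log_exp]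
  have h2 : ∀ t : ℝ, Real.exp t + Real.exp (-t) = 2 * Real.cosh t := fun t => by
    rw [Real.cosh_eq]; ring
  have e1 : L * -r = -(L * r) := by ring
  have e2 : L * (-1 : ℝ) = -L := by ring
  have e3 : Real.exp L = Real.exp L := rfl
  rw [e1, e2, h2, h2 L]
  have : Real.cosh (L * r) ≤ Real.cosh L := by
    rw [Real.cosh_le_cosh, abs_mul]
    calc |L| * |r| ≤ |L| * 1 := by
          apply mul_le_mul_of_nonneg_left _ (abs_nonneg _)
          rw [abs_of_nonneg hr0]; exact hr1
      _ = |L| := mul_one _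
  linarith

theorem matrix_rpow_add_rpow_neg_le {l : Type*} [Fintype l] [DecidableEq l]
    {A : Matrix l l ℂ} (hA : A.PosDef) (r : ℝ) (hr0 : 0 ≤ r) (hr1 : r ≤ 1) :
    loewnerLE (mrpow A r + mrpow A (-r)) (A + mrpow A (-1)) := by
  have hH := hA.1
  set U : Matrix l l ℂ := (hH.eigenvectorUnitary : Matrix l l ℂ) with hU
  set lam := hH.eigenvalues with hlam
  have hmr : ∀ s : ℝ, mrpow A s = U * Matrix.diagonal (fun i => ((lam i ^ s : ℝ) : ℂ)) * star U := by
    intro s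
    simp only [mrpow, dif_pos hH, hU, hlam]
  have hAeq : A = U * Matrix.diagonal (fun i => ((lam i : ℝ) : ℂ)) * star U := by
    conv_lhs => rw [hH.spectral_theorem]
    rfl
  unfold loewnerLE
  rw [hmr, hmr, hmr, hAeq]
  have hcomb :
      U * Matrix.diagonal (fun i => ((lam i : ℝ) : ℂ)) * star U +
        U * Matrix.diagonal (fun i => ((lam i ^ (-1 : ℝ) : ℝ) : ℂ)) * star U -
        (U * Matrix.diagonal (fun i => ((lam i ^ r : ℝ) : ℂ)) * star U +
          U * Matrix.diagonal (fun i => ((lam i ^ (-r) : ℝ) : ℂ)) * star U) =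
      U * Matrix.diagonal
          (fun i => ((lam i + lam i ^ (-1 : ℝ) - (lam i ^ r + lam i ^ (-r)) : ℝ) : ℂ)) *
        star U := by
    have : Matrix.diagonal
          (fun i => ((lam i + lam i ^ (-1 : ℝ) - (lam i ^ r + lam i ^ (-r)) : ℝ) : ℂ)) =
        Matrix.diagonal (fun i => ((lam i : ℝ) : ℂ)) +
          Matrix.diagonal (fun i => ((lam i ^ (-1 : ℝ) : ℝ) : ℂ)) -
          (Matrix.diagonal (fun i => ((lam i ^ r : ℝ) : ℂ)) +
            Matrix.diagonal (fun i => ((lam i ^ (-r) : ℝ) : ℂ))) := by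
      simp only [Matrix.diagonal_add, Matrix.diagonal_sub]
      funext i
      push_cast
      ring
    rw [this]
    simp only [Matrix.mul_add, Matrix.add_mul, Matrix.mul_sub, Matrix.sub_mul]
  rw [hcomb]
  have hdiag : (Matrix.diagonal
      (fun i => ((lam i + lam i ^ (-1 : ℝ) - (lam i ^ r + lam i ^ (-r)) : ℝ) : ℂ))).PosSemidef := by
    rw [Matrix.posSemidef_diagonal_iff]
    intro i
    rw [Complex.zero_le_real]
    have hpos := hA.eigenvalues_pos i
    have := scalar_key hpos hr0 hr1
    linarith
  simpa [Matrix.star_eq_conjTranspose] using hdiag.mul_mul_conjTranspose_same U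
end

section
/- Classical Callebaut inequality (middle step): if 0 ≤ t ≤ s ≤ 1/2 or 1/2 ≤ s ≤ t ≤ 1, and a_1,...,a_m, b_1,...,b_m are positive reals, then (∑_j a_j^s b_j^(1-s)) · (∑_j a_j^(1-s) b_j^s) ≤ (∑_j a_j^t b_j^(1-t)) · (∑_j a_j^(1-t) b_j^t). -/
open Finset

private lemma aux1 (r c d : ℝ) (hr : 0 < r) (hc : 0 ≤ c) (hd : 0 ≤ d) :
    0 ≤ (r ^ c - 1) * (r ^ d - 1) := by
  rcases le_total 1 r with h | h
  · have h1 : 1 ≤ r ^ c := Real.one_le_rpow h hc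
    have h2 : 1 ≤ r ^ d := Real.one_le_rpow h hd
    nlinarith
  · have h1 : r ^ c ≤ 1 := Real.rpow_le_one hr.le h hc
    have h2 : r ^ d ≤ 1 := Real.rpow_le_one hr.le h hd
    nlinarith

private lemma keyr (r : ℝ) (hr : 0 < r) (s t : ℝ)
    (h : (0 ≤ t ∧ t ≤ s ∧ s ≤ 1/2) ∨ (1/2 ≤ s ∧ s ≤ t ∧ t ≤ 1)) :
    r ^ s + r ^ (1 - s) ≤ r ^ t + r ^ (1 - t) := by
  have expand : (r ^ s - r ^ t) * (r ^ (1 - s - t) - 1)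
      = r ^ t + r ^ (1 - t) - r ^ s - r ^ (1 - s) := by
    rw [sub_mul, mul_sub, mul_sub, ← Real.rpow_add hr, ← Real.rpow_add hr]
    ring_nf
  have main : 0 ≤ (r ^ s - r ^ t) * (r ^ (1 - s - t) - 1) := by
    rcases h with ⟨ht, hts, hs⟩ | ⟨hs, hst, ht⟩
    · have h1 : r ^ s - r ^ t = r ^ t * (r ^ (s - t) - 1) := by
        rw [mul_sub, ← Real.rpow_add hr, mul_one]
        ring_nf
      rw [h1, mul_assoc]
      exact mul_nonneg (Real.rpow_pos_of_pos hr t).le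
        (aux1 r (s - t) (1 - s - t) hr (by linarith) (by linarith))
    · have h1 : (r ^ s - r ^ t) * (r ^ (1 - s - t) - 1)
        = (r ^ s * r ^ (1 - s - t)) * ((r ^ (t - s) - 1) * (r ^ (s + t - 1) - 1)) := by
        have e1 : r ^ s * r ^ (t - s) = r ^ t := by
          rw [← Real.rpow_add hr]; ring_nf
        have e2 : r ^ (1 - s - t) * r ^ (s + t - 1) = 1 := by
          rw [← Real.rpow_add hr]
          rw [show (1 : ℝ) - s - t + (s + t - 1) = 0 by ring, Real.rpow_zero]
        linear_combination (r ^ (1 - s - t) - r ^ (1 - s - t) * r ^ (s + t - 1)) * e1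
          + (r ^ s - r ^ t) * e2
      rw [h1]
      exact mul_nonneg
        (mul_nonneg (Real.rpow_pos_of_pos hr s).le (Real.rpow_pos_of_pos hr (1 - s - t)).le)
        (aux1 r (t - s) (s + t - 1) hr (by linarith) (by linarith))
  linarith

private lemma key (x y : ℝ) (hx : 0 < x) (hy : 0 < y) (s t : ℝ)
    (h : (0 ≤ t ∧ t ≤ s ∧ s ≤ 1/2) ∨ (1/2 ≤ s ∧ s ≤ t ∧ t ≤ 1)) :
    x ^ s * y ^ (1 - s) + x ^ (1 - s) * y ^ s ≤ x ^ t * y ^ (1 - t) + x ^ (1 - t) * y ^ t := by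
  have e : ∀ α : ℝ, x ^ α * y ^ (1 - α) = y * (x / y) ^ α := by
    intro α
    rw [Real.div_rpow hx.le hy.le, Real.rpow_sub hy, Real.rpow_one]
    have : y ^ α ≠ 0 := (Real.rpow_pos_of_pos hy α).ne'
    field_simp
  have e' : ∀ α : ℝ, x ^ (1 - α) * y ^ α = y * (x / y) ^ (1 - α) := by
    intro α
    have := e (1 - α)
    simpa using this
  rw [e s, e' s, e t, e' t]
  have hr : 0 < x / y := div_pos hx hy
  have := keyr (x / y) hr s t h
  nlinarith

theorem callebaut_middle (m : ℕ) (a b : Fin m → ℝ) (ha : ∀ j, 0 < a j) (hb : ∀ j, 0 < b j)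
    (s t : ℝ)
    (h : (0 ≤ t ∧ t ≤ s ∧ s ≤ 1/2) ∨ (1/2 ≤ s ∧ s ≤ t ∧ t ≤ 1)) :
    (∑ j, a j ^ s * b j ^ (1 - s)) * (∑ j, a j ^ (1 - s) * b j ^ s) ≤
      (∑ j, a j ^ t * b j ^ (1 - t)) * (∑ j, a j ^ (1 - t) * b j ^ t) := by
  have term : ∀ (u : ℝ) (j k : Fin m),
      (a j ^ u * b j ^ (1 - u)) * (a k ^ (1 - u) * b k ^ u)
      = (a j * b k) ^ u * (a k * b j) ^ (1 - u) := by
    intro u j k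
    rw [Real.mul_rpow (ha j).le (hb k).le, Real.mul_rpow (ha k).le (hb j).le]
    ring
  have half : ∀ (u : ℝ),
      2 * ((∑ j, a j ^ u * b j ^ (1 - u)) * (∑ j, a j ^ (1 - u) * b j ^ u))
      = ∑ j, ∑ k, ((a j * b k) ^ u * (a k * b j) ^ (1 - u)
          + (a j * b k) ^ (1 - u) * (a k * b j) ^ u) := by
    intro u
    rw [Finset.sum_mul_sum]
    have h2 : (∑ j, ∑ k, (a j ^ u * b j ^ (1 - u)) * (a k ^ (1 - u) * b k ^ u))
        = ∑ j, ∑ k, (a k ^ u * b k ^ (1 - u)) * (a j ^ (1 - u) * b j ^ u) :=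
      Finset.sum_comm
    rw [two_mul]
    nth_rewrite 2 [h2]
    rw [← Finset.sum_add_distrib]
    congr 1
    ext j
    rw [← Finset.sum_add_distrib]
    congr 1
    ext k
    rw [term u j k, term u k j]
    ring
  have hmain : 2 * ((∑ j, a j ^ s * b j ^ (1 - s)) * (∑ j, a j ^ (1 - s) * b j ^ s))
      ≤ 2 * ((∑ j, a j ^ t * b j ^ (1 - t)) * (∑ j, a j ^ (1 - t) * b j ^ t)) := by
    rw [half s, half t]
    apply Finset.sum_le_sum
    intro j _
    apply Finset.sum_le_sum
    intro k _
    exact key (a j * b k) (a k * b j) (mul_pos (ha j) (hb k)) (mul_pos (ha k) (hb j)) s t h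
  linarith
end

section
/- The Callebaut function is increasing in |r|: for positive reals a_1,...,a_m, b_1,...,b_m, a fixed real s, and 0 ≤ r_1 ≤ r_2 (with all exponents defined), the function f(r) = (∑_j a_j^(s+r) b_j^(s-r)) · (∑_j a_j^(s-r) b_j^(s+r)) satisfies f(r_1) ≤ f(r_2). -/
open Finset

lemma holder_aux {m : ℕ} (x y : Fin m → ℝ) (hx : ∀ j, 0 < x j) (hy : ∀ j, 0 < y j)
    {p : ℝ} (hp0 : 0 < p) (hp1 : p < 1) :
    ∑ j, x j ^ p * y j ^ (1 - p) ≤ (∑ j, x j) ^ p * (∑ j, y j) ^ (1 - p) := by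
  have hpq : (1 / p).HolderConjugate (1 / (1 - p)) := by
    constructor
    · rw [one_div, one_div, inv_inv, inv_inv, inv_one]; ring
    · positivity
    · exact one_div_pos.mpr (by linarith)
  have key := Real.inner_le_Lp_mul_Lq (univ : Finset (Fin m))
    (fun j => x j ^ p) (fun j => y j ^ (1 - p)) hpq
  simp only [one_div_one_div] at key
  refine key.trans_eq ?_
  have h1 : ∀ j, |x j ^ p| ^ (1/p) = x j := fun j => by
    rw [abs_of_pos (Real.rpow_pos_of_pos (hx j) _), ← Real.rpow_mul (hx j).le,
      mul_one_div, div_self hp0.ne', Real.rpow_one]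
  have h2 : ∀ j, |y j ^ (1-p)| ^ (1/(1-p)) = y j := fun j => by
    rw [abs_of_pos (Real.rpow_pos_of_pos (hy j) _), ← Real.rpow_mul (hy j).le,
      mul_one_div, div_self (by linarith), Real.rpow_one]
  simp only [h1, h2]

theorem callebaut_increasing (m : ℕ) (a b : Fin m → ℝ) (ha : ∀ j, 0 < a j) (hb : ∀ j, 0 < b j)
    (s r₁ r₂ : ℝ) (hr₁ : 0 ≤ r₁) (hr : r₁ ≤ r₂) :
    (∑ j, a j ^ (s + r₁) * b j ^ (s - r₁)) * (∑ j, a j ^ (s - r₁) * b j ^ (s + r₁)) ≤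
      (∑ j, a j ^ (s + r₂) * b j ^ (s - r₂)) * (∑ j, a j ^ (s - r₂) * b j ^ (s + r₂)) := by
  rcases Nat.eq_zero_or_pos m with rfl | hm
  · simp
  rcases eq_or_lt_of_le hr with rfl | hlt
  · exact le_refl _
  have hr₂ : 0 < r₂ := lt_of_le_of_lt hr₁ hlt
  set p : ℝ := (r₂ + r₁) / (2 * r₂) with hp
  have hp0 : 0 < p := div_pos (by linarith) (by linarith)
  have hp1 : p < 1 := by rw [hp, div_lt_one (by linarith)]; linarith
  set x : Fin m → ℝ := fun j => a j ^ (s + r₂) * b j ^ (s - r₂) with hxdef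
  set y : Fin m → ℝ := fun j => a j ^ (s - r₂) * b j ^ (s + r₂) with hydef
  have hx : ∀ j, 0 < x j := fun j =>
    mul_pos (Real.rpow_pos_of_pos (ha j) _) (Real.rpow_pos_of_pos (hb j) _)
  have hy : ∀ j, 0 < y j := fun j =>
    mul_pos (Real.rpow_pos_of_pos (ha j) _) (Real.rpow_pos_of_pos (hb j) _)
  have e1 : (s + r₂) * p + (s - r₂) * (1 - p) = s + r₁ := by
    rw [hp]; field_simp; ring
  have e2 : (s + r₂) * (1 - p) + (s - r₂) * (1 - (1 - p)) = s - r₁ := by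
    rw [hp]; field_simp; ring
  have e3 : (s - r₂) * p + (s + r₂) * (1 - p) = s - r₁ := by
    rw [hp]; field_simp; ring
  have e4 : (s - r₂) * (1 - p) + (s + r₂) * (1 - (1 - p)) = s + r₁ := by
    rw [hp]; field_simp; ring
  have expand : ∀ (u v : ℝ) (hu : 0 < u) (hv : 0 < v) (c d q : ℝ),
      (u ^ c * v ^ d) ^ q = u ^ (c * q) * v ^ (d * q) := by
    intro u v hu hv c d q
    rw [Real.mul_rpow (Real.rpow_pos_of_pos hu _).le (Real.rpow_pos_of_pos hv _).le,
      ← Real.rpow_mul hu.le, ← Real.rpow_mul hv.le]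
  have key1 : ∀ j, x j ^ p * y j ^ (1 - p) = a j ^ (s + r₁) * b j ^ (s - r₁) := by
    intro j
    rw [hxdef, hydef]
    dsimp only
    rw [expand _ _ (ha j) (hb j), expand _ _ (ha j) (hb j), mul_mul_mul_comm,
      ← Real.rpow_add (ha j), ← Real.rpow_add (hb j), e1, e3]
  have key2 : ∀ j, x j ^ (1 - p) * y j ^ (1 - (1 - p)) =
      a j ^ (s - r₁) * b j ^ (s + r₁) := by
    intro j
    rw [hxdef, hydef]
    dsimp only
    rw [expand _ _ (ha j) (hb j), expand _ _ (ha j) (hb j), mul_mul_mul_comm,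
      ← Real.rpow_add (ha j), ← Real.rpow_add (hb j), e2, e4]
  have h1 : (∑ j, a j ^ (s + r₁) * b j ^ (s - r₁)) ≤ (∑ j, x j) ^ p * (∑ j, y j) ^ (1 - p) := by
    calc (∑ j, a j ^ (s + r₁) * b j ^ (s - r₁)) = ∑ j, x j ^ p * y j ^ (1 - p) := by
          simp_rw [key1]
      _ ≤ _ := holder_aux x y hx hy hp0 hp1
  have h2 : (∑ j, a j ^ (s - r₁) * b j ^ (s + r₁)) ≤
      (∑ j, x j) ^ (1 - p) * (∑ j, y j) ^ (1 - (1 - p)) := by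
    calc (∑ j, a j ^ (s - r₁) * b j ^ (s + r₁)) = ∑ j, x j ^ (1 - p) * y j ^ (1 - (1 - p)) := by
          simp_rw [key2]
      _ ≤ _ := holder_aux x y hx hy (by linarith) (by linarith)
  have hX : 0 < ∑ j, x j := Finset.sum_pos (fun j _ => hx j) (by simp [Fin.pos_iff_nonempty.mp hm])
  have hY : 0 < ∑ j, y j := Finset.sum_pos (fun j _ => hy j) (by simp [Fin.pos_iff_nonempty.mp hm])
  calc (∑ j, a j ^ (s + r₁) * b j ^ (s - r₁)) * (∑ j, a j ^ (s - r₁) * b j ^ (s + r₁))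
      ≤ ((∑ j, x j) ^ p * (∑ j, y j) ^ (1 - p)) *
        ((∑ j, x j) ^ (1 - p) * (∑ j, y j) ^ (1 - (1 - p))) := by
        apply mul_le_mul h1 h2
        · exact Finset.sum_nonneg fun j _ =>
            mul_nonneg (Real.rpow_pos_of_pos (ha j) _).le (Real.rpow_pos_of_pos (hb j) _).le
        · positivity
    _ = (∑ j, x j) * (∑ j, y j) := by
        rw [mul_mul_mul_comm, ← Real.rpow_add hX, ← Real.rpow_add hY,
          show p + (1 - p) = 1 by ring, show (1 - p) + (1 - (1 - p)) = 1 by ring,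
          Real.rpow_one, Real.rpow_one]
end

section
/- For positive definite matrices A and B and the weighted geometric mean A♯_t B = A^(1/2)(A^(-1/2) B A^(-1/2))^t A^(1/2), one has (A♯_t B)♯(A♯_(1-t) B) = A♯B for all t ∈ [0,1], where ♯ = ♯_(1/2) is the geometric mean. -/
open Matrix Finset
open scoped ComplexOrder

open scoped ComplexOrder

section aux
variable {l : Type*} [Fintype l] [DecidableEq l]

lemma aux_contOn (f : ℝ → ℝ) (A : Matrix l l ℂ) : ContinuousOn f (spectrum ℝ A) := by
  rw [continuousOn_iff_continuous_restrict]
  fun_prop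

lemma mrpow_eq_cfc {A : Matrix l l ℂ} (hA : A.IsHermitian) (r : ℝ) :
    mrpow A r = cfc (fun x : ℝ => x ^ r) A := by
  rw [hA.cfc_eq]
  simp only [mrpow, dif_pos hA, Matrix.IsHermitian.cfc]
  rfl

lemma mrpow_isHermitian {A : Matrix l l ℂ} (hA : A.IsHermitian) (r : ℝ) :
    (mrpow A r).IsHermitian := by
  rw [mrpow_eq_cfc hA r]
  exact cfc_predicate (fun x : ℝ => x ^ r) A

lemma aux_isUnit {M N : Matrix l l ℂ} (h : M * N = 1) : IsUnit M :=
  ⟨⟨M, N, h, mul_eq_one_comm.mp h⟩, rfl⟩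

lemma aux_posDef_conj {A M : Matrix l l ℂ} (hA : A.PosDef) (hM : IsUnit M) :
    (M * A * Mᴴ).PosDef := by
  refine Matrix.posDef_iff_dotProduct_mulVec.mpr ⟨?_, fun x hx => ?_⟩
  · have := Matrix.isHermitian_conjTranspose_mul_mul Mᴴ hA.1
    simpa using this
  · have hMH : IsUnit Mᴴ := by
      have := hM.star
      rwa [Matrix.star_eq_conjTranspose] at this
    have hMx : Mᴴ *ᵥ x ≠ 0 := by
      have : Function.Injective (Mᴴ.mulVec) :=
        Matrix.mulVec_injective_iff_isUnit.mpr hMH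
      intro h
      exact hx (by simpa using this (h.trans (Matrix.mulVec_zero Mᴴ).symm))
    have h2 := hA.dotProduct_mulVec_pos hMx
    have : M * A * Mᴴ = (Mᴴ)ᴴ * A * Mᴴ := by simp
    rw [this]
    simpa only [star_mulVec, dotProduct_mulVec, vecMul_vecMul] using h2

lemma aux_spectrum_pos {A : Matrix l l ℂ} (hA : A.PosDef) {x : ℝ}
    (hx : x ∈ spectrum ℝ A) : 0 < x := by
  rw [hA.1.spectrum_real_eq_range_eigenvalues] at hx
  obtain ⟨i, rfl⟩ := hx
  exact hA.eigenvalues_pos i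

lemma mrpow_posDef {A : Matrix l l ℂ} (hA : A.PosDef) (r : ℝ) : (mrpow A r).PosDef := by
  unfold mrpow
  rw [dif_pos hA.1]
  have hD : (Matrix.diagonal fun i => ((hA.1.eigenvalues i ^ r : ℝ) : ℂ)).PosDef :=
    Matrix.posDef_diagonal_iff.mpr fun i => by
      rw [Complex.zero_lt_real]
      exact Real.rpow_pos_of_pos (hA.eigenvalues_pos i) r
  have hU : IsUnit (hA.1.eigenvectorUnitary : Matrix l l ℂ) :=
    aux_isUnit (Unitary.mul_star_self_of_mem hA.1.eigenvectorUnitary.2)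
  have := aux_posDef_conj hD hU
  simpa [Matrix.star_eq_conjTranspose] using this

lemma mrpow_mul_mrpow {A : Matrix l l ℂ} (hA : A.PosDef) (r s : ℝ) :
    mrpow A r * mrpow A s = mrpow A (r + s) := by
  rw [mrpow_eq_cfc hA.1, mrpow_eq_cfc hA.1, mrpow_eq_cfc hA.1,
    ← cfc_mul _ _ A (aux_contOn _ A) (aux_contOn _ A)]
  apply cfc_congr
  intro x hx
  exact (Real.rpow_add (aux_spectrum_pos hA hx) r s).symm

lemma mrpow_one' {A : Matrix l l ℂ} (hA : A.PosDef) : mrpow A 1 = A := by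
  rw [mrpow_eq_cfc hA.1]
  have : cfc (fun x : ℝ => x ^ (1 : ℝ)) A = cfc (id : ℝ → ℝ) A :=
    cfc_congr fun x _ => Real.rpow_one x
  rw [this]
  exact cfc_id ℝ A hA.1.isSelfAdjoint

lemma mrpow_zero' {A : Matrix l l ℂ} (hA : A.PosDef) : mrpow A 0 = 1 := by
  rw [mrpow_eq_cfc hA.1]
  have : cfc (fun x : ℝ => x ^ (0 : ℝ)) A = cfc (fun _ : ℝ => (1 : ℝ)) A :=
    cfc_congr fun x _ => Real.rpow_zero x
  rw [this]
  exact cfc_const_one ℝ A hA.1.isSelfAdjoint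

lemma mrpow_neg_mul {A : Matrix l l ℂ} (hA : A.PosDef) (r : ℝ) :
    mrpow A r * mrpow A (-r) = 1 := by
  rw [mrpow_mul_mrpow hA, add_neg_cancel, mrpow_zero' hA]

lemma mrpow_half_sq {A : Matrix l l ℂ} (hA : A.PosDef) :
    mrpow A (1/2) * mrpow A (1/2) = A := by
  rw [mrpow_mul_mrpow hA]
  norm_num [mrpow_one' hA]

/-- Riccati uniqueness: the geometric mean is the unique PSD solution `G` of `G P⁻¹ G = Q`. -/
lemma wgmean_half_eq_of_riccati {P Q G : Matrix l l ℂ} (hP : P.PosDef) (hQ : Q.PosDef)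
    (hG : G.PosSemidef) (h : G * P⁻¹ * G = Q) : wgmean P Q (1/2) = G := by
  set S := mrpow P (1/2) with hS
  set T := mrpow P (-(1/2)) with hT
  have hTherm : T.IsHermitian := mrpow_isHermitian hP.1 _
  have hST : S * T = 1 := mrpow_neg_mul hP (1/2)
  have hTS : T * S = 1 := by
    have := mrpow_mul_mrpow hP (-(1/2)) (1/2)
    rw [neg_add_cancel, mrpow_zero' hP] at this
    exact this
  have hTT : T * T = P⁻¹ := by
    apply Eq.symm
    apply Matrix.inv_eq_right_inv
    have h1 : T * T = mrpow P (-1) := by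
      rw [hT, mrpow_mul_mrpow hP]; norm_num
    rw [h1]
    have := mrpow_mul_mrpow hP 1 (-1)
    rw [add_neg_cancel, mrpow_zero' hP, mrpow_one' hP] at this
    exact this
  set M := T * Q * T with hM
  have hMpd : M.PosDef := by
    have := aux_posDef_conj hQ (aux_isUnit hTS)
    rwa [hTherm.eq] at this
  set H := T * G * T with hH
  have hHpsd : H.PosSemidef := by
    have := hG.mul_mul_conjTranspose_same T
    rwa [hTherm.eq] at this
  have hH2 : H * H = M := by
    calc T * G * T * (T * G * T) = T * (G * (T * T) * G) * T := by
          simp only [mul_assoc]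
      _ = T * (G * P⁻¹ * G) * T := by rw [hTT]
      _ = M := by rw [h]
  have hkey : mrpow M (1/2) = H := by
    open scoped MatrixOrder in
    exact (CFC.sqrt_unique (mrpow_half_sq hMpd) (mrpow_posDef hMpd (1/2)).posSemidef.nonneg).symm.trans
      (CFC.sqrt_unique hH2 hHpsd.nonneg)
  show S * mrpow (T * Q * T) (1/2) * S = G
  rw [← hM, hkey, hH]
  calc S * (T * G * T) * S = (S * T) * G * (T * S) := by simp only [mul_assoc]
    _ = G := by rw [hST, hTS, one_mul, mul_one]

end aux

theorem gmean_of_wgmean_pair {l : Type*} [Fintype l] [DecidableEq l]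
    {A B : Matrix l l ℂ} (hA : A.PosDef) (hB : B.PosDef) (t : ℝ) (ht0 : 0 ≤ t) (ht1 : t ≤ 1) :
    wgmean (wgmean A B t) (wgmean A B (1 - t)) (1/2) = wgmean A B (1/2) := by
  clear ht0 ht1
  set R := mrpow A (1/2) with hR
  set Rn := mrpow A (-(1/2)) with hRn
  have hRherm : R.IsHermitian := mrpow_isHermitian hA.1 _
  have hRnherm : Rn.IsHermitian := mrpow_isHermitian hA.1 _
  have hRRn : R * Rn = 1 := mrpow_neg_mul hA (1/2)
  have hRnR : Rn * R = 1 := by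
    have := mrpow_mul_mrpow hA (-(1/2)) (1/2)
    rw [neg_add_cancel, mrpow_zero' hA] at this
    exact this
  set C := Rn * B * Rn with hC
  have hCpd : C.PosDef := by
    have := aux_posDef_conj hB (aux_isUnit hRnR)
    rwa [hRnherm.eq] at this
  have hX : wgmean A B t = R * mrpow C t * R := rfl
  have hY : wgmean A B (1 - t) = R * mrpow C (1 - t) * R := rfl
  have hXpd : (wgmean A B t).PosDef := by
    rw [hX]
    have := aux_posDef_conj (mrpow_posDef hCpd t) (aux_isUnit hRRn)
    rwa [hRherm.eq] at this
  have hYpd : (wgmean A B (1 - t)).PosDef := by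
    rw [hY]
    have := aux_posDef_conj (mrpow_posDef hCpd (1 - t)) (aux_isUnit hRRn)
    rwa [hRherm.eq] at this
  have hGpd : (R * mrpow C (1/2) * R).PosDef := by
    have := aux_posDef_conj (mrpow_posDef hCpd (1/2)) (aux_isUnit hRRn)
    rwa [hRherm.eq] at this
  have hXinv : (wgmean A B t)⁻¹ = Rn * mrpow C (-t) * Rn := by
    apply Matrix.inv_eq_right_inv
    rw [hX]
    calc R * mrpow C t * R * (Rn * mrpow C (-t) * Rn)
        = R * (mrpow C t * (R * Rn) * mrpow C (-t)) * Rn := by simp only [mul_assoc]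
      _ = R * (mrpow C t * mrpow C (-t)) * Rn := by rw [hRRn, mul_one]
      _ = R * Rn := by rw [mrpow_neg_mul hCpd, mul_one]
      _ = 1 := hRRn
  have hric : (R * mrpow C (1/2) * R) * (wgmean A B t)⁻¹ * (R * mrpow C (1/2) * R)
      = wgmean A B (1 - t) := by
    rw [hXinv, hY]
    have e1 : mrpow C (1/2) * mrpow C (-t) * mrpow C (1/2) = mrpow C (1 - t) := by
      rw [mrpow_mul_mrpow hCpd, mrpow_mul_mrpow hCpd]
      norm_num
      ring_nf
    calc R * mrpow C (1/2) * R * (Rn * mrpow C (-t) * Rn) * (R * mrpow C (1/2) * R)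
        = R * (mrpow C (1/2) * (R * Rn) * mrpow C (-t) * (Rn * R) * mrpow C (1/2)) * R := by
          simp only [mul_assoc]
      _ = R * (mrpow C (1/2) * mrpow C (-t) * mrpow C (1/2)) * R := by
          rw [hRRn, hRnR, mul_one, mul_one]
      _ = R * mrpow C (1 - t) * R := by rw [e1]
  rw [wgmean_half_eq_of_riccati hXpd hYpd hGpd.posSemidef hric]
  rfl
end

section
/- Subadditivity-type inequality for the geometric mean: for positive definite matrices A_1, ..., A_m, B_1, ..., B_m, one has ∑_{j=1}^m (A_j ♯ B_j) ≤ (∑_{j=1}^m A_j) ♯ (∑_{j=1}^m B_j) in the Loewner order. -/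
open Matrix Finset
open scoped ComplexOrder

set_option linter.unusedSectionVars false

namespace GmHelp

variable {l : Type*} [Fintype l] [DecidableEq l]

lemma mrpow_eq {A : Matrix l l ℂ} (hA : A.IsHermitian) (r : ℝ) :
    mrpow A r = (hA.eigenvectorUnitary : Matrix l l ℂ) *
      Matrix.diagonal (fun i => ((hA.eigenvalues i ^ r : ℝ) : ℂ)) *
      star (hA.eigenvectorUnitary : Matrix l l ℂ) := by
  rw [mrpow, dif_pos hA]

lemma U_mul_star {A : Matrix l l ℂ} (hA : A.IsHermitian) :
    (hA.eigenvectorUnitary : Matrix l l ℂ) * star (hA.eigenvectorUnitary : Matrix l l ℂ) = 1 :=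
  Matrix.mem_unitaryGroup_iff.mp hA.eigenvectorUnitary.2

lemma star_mul_U {A : Matrix l l ℂ} (hA : A.IsHermitian) :
    star (hA.eigenvectorUnitary : Matrix l l ℂ) * (hA.eigenvectorUnitary : Matrix l l ℂ) = 1 :=
  Matrix.mem_unitaryGroup_iff'.mp hA.eigenvectorUnitary.2

lemma conj_mul {A : Matrix l l ℂ} (hA : A.IsHermitian) (f g : l → ℂ) :
    ((hA.eigenvectorUnitary : Matrix l l ℂ) * Matrix.diagonal f *
        star (hA.eigenvectorUnitary : Matrix l l ℂ)) *
      ((hA.eigenvectorUnitary : Matrix l l ℂ) * Matrix.diagonal g *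
        star (hA.eigenvectorUnitary : Matrix l l ℂ)) =
    (hA.eigenvectorUnitary : Matrix l l ℂ) * Matrix.diagonal (fun i => f i * g i) *
      star (hA.eigenvectorUnitary : Matrix l l ℂ) := by
  set U : Matrix l l ℂ := (hA.eigenvectorUnitary : Matrix l l ℂ)
  calc U * Matrix.diagonal f * star U * (U * Matrix.diagonal g * star U)
      = U * Matrix.diagonal f * (star U * U) * Matrix.diagonal g * star U := by
        noncomm_ring
    _ = U * (Matrix.diagonal f * Matrix.diagonal g) * star U := by
        rw [star_mul_U hA]; noncomm_ring
    _ = U * Matrix.diagonal (fun i => f i * g i) * star U := by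
        rw [Matrix.diagonal_mul_diagonal]

lemma conj_isHermitian {A : Matrix l l ℂ} (hA : A.IsHermitian) (f : l → ℝ) :
    ((hA.eigenvectorUnitary : Matrix l l ℂ) * Matrix.diagonal (fun i => (f i : ℂ)) *
      star (hA.eigenvectorUnitary : Matrix l l ℂ)).IsHermitian := by
  have hD : (Matrix.diagonal (fun i => ((f i : ℂ)))).IsHermitian :=
    Matrix.isHermitian_diagonal_of_self_adjoint _
      (funext fun i => Complex.conj_ofReal (f i))
  have h2 := Matrix.isHermitian_conjTranspose_mul_mul
    (star (hA.eigenvectorUnitary : Matrix l l ℂ)) hD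
  simpa [← Matrix.star_eq_conjTranspose, star_star] using h2

lemma conj_posSemidef {A : Matrix l l ℂ} (hA : A.IsHermitian) (f : l → ℝ)
    (hf : ∀ i, 0 ≤ f i) :
    ((hA.eigenvectorUnitary : Matrix l l ℂ) * Matrix.diagonal (fun i => (f i : ℂ)) *
      star (hA.eigenvectorUnitary : Matrix l l ℂ)).PosSemidef := by
  have hD : (Matrix.diagonal (fun i => ((f i : ℂ)))).PosSemidef := by
    refine Matrix.posSemidef_diagonal_iff.mpr fun i => ?_
    exact Complex.zero_le_real.mpr (hf i)
  have h2 := hD.mul_mul_conjTranspose_same (hA.eigenvectorUnitary : Matrix l l ℂ)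
  simpa [← Matrix.star_eq_conjTranspose] using h2

lemma mrpow_isHermitian {A : Matrix l l ℂ} (hA : A.IsHermitian) (r : ℝ) :
    (mrpow A r).IsHermitian := by
  rw [mrpow_eq hA]
  exact conj_isHermitian hA _

lemma mrpow_posSemidef {A : Matrix l l ℂ} (hA : A.PosSemidef) (r : ℝ) :
    (mrpow A r).PosSemidef := by
  rw [mrpow_eq hA.1]
  exact conj_posSemidef hA.1 _ fun i => Real.rpow_nonneg (hA.eigenvalues_nonneg i) r

lemma mrpow_mul_mrpow {A : Matrix l l ℂ} (hA : A.PosDef) (r s : ℝ) :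
    mrpow A r * mrpow A s = mrpow A (r + s) := by
  rw [mrpow_eq hA.1, mrpow_eq hA.1, mrpow_eq hA.1, conj_mul hA.1]
  have : (fun i => ((hA.1.eigenvalues i ^ r : ℝ) : ℂ) * ((hA.1.eigenvalues i ^ s : ℝ) : ℂ)) =
      fun i => ((hA.1.eigenvalues i ^ (r + s) : ℝ) : ℂ) := by
    funext i
    rw [← Complex.ofReal_mul, ← Real.rpow_add (hA.eigenvalues_pos i)]
  rw [this]

lemma mrpow_zero {A : Matrix l l ℂ} (hA : A.IsHermitian) : mrpow A 0 = 1 := by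
  rw [mrpow_eq hA]
  simp only [Real.rpow_zero, Complex.ofReal_one]
  rw [Matrix.diagonal_one, mul_one, U_mul_star hA]

lemma mrpow_one' {A : Matrix l l ℂ} (hA : A.IsHermitian) : mrpow A 1 = A := by
  rw [mrpow_eq hA]
  simp only [Real.rpow_one]
  exact hA.spectral_theorem.symm

lemma mrpow_half_mul_self {C : Matrix l l ℂ} (hC : C.PosSemidef) :
    mrpow C (1/2) * mrpow C (1/2) = C := by
  rw [mrpow_eq hC.1, conj_mul hC.1]
  have : (fun i => ((hC.1.eigenvalues i ^ ((1:ℝ)/2) : ℝ) : ℂ) *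
      ((hC.1.eigenvalues i ^ ((1:ℝ)/2) : ℝ) : ℂ)) = fun i => ((hC.1.eigenvalues i : ℝ) : ℂ) := by
    funext i
    rw [← Complex.ofReal_mul, ← Real.rpow_add' (hC.eigenvalues_nonneg i) (by norm_num)]
    norm_num
  rw [this]
  exact hC.1.spectral_theorem.symm

end GmHelp

namespace GmHelp

variable {l : Type*} [Fintype l] [DecidableEq l]

section SQ

variable {S : Matrix l l ℂ} (hS : S.PosDef)

lemma PQ_one (hS : S.PosDef) : mrpow S (1/2) * mrpow S (-(1/2)) = 1 := by
  rw [mrpow_mul_mrpow hS]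
  norm_num [mrpow_zero hS.1]

lemma QP_one (hS : S.PosDef) : mrpow S (-(1/2)) * mrpow S (1/2) = 1 := by
  rw [mrpow_mul_mrpow hS]
  norm_num [mrpow_zero hS.1]

lemma PP_eq (hS : S.PosDef) : mrpow S (1/2) * mrpow S (1/2) = S := by
  rw [mrpow_mul_mrpow hS]
  norm_num [mrpow_one' hS.1]

lemma inv_eq_QQ (hS : S.PosDef) : S⁻¹ = mrpow S (-(1/2)) * mrpow S (-(1/2)) := by
  apply Matrix.inv_eq_left_inv
  calc mrpow S (-(1/2)) * mrpow S (-(1/2)) * S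
      = mrpow S (-(1/2)) * mrpow S (-(1/2)) * (mrpow S (1/2) * mrpow S (1/2)) := by
        rw [PP_eq hS]
    _ = mrpow S (-(1/2)) * (mrpow S (-(1/2)) * mrpow S (1/2)) * mrpow S (1/2) := by
        noncomm_ring
    _ = 1 := by rw [QP_one hS, mul_one, QP_one hS]

end SQ

lemma conj_psd {M X : Matrix l l ℂ} (hX : X.PosSemidef) (hM : M.IsHermitian) :
    (M * X * M).PosSemidef := by
  have := hX.mul_mul_conjTranspose_same M
  rwa [hM.eq] at this

lemma conj_herm {M X : Matrix l l ℂ} (hX : X.IsHermitian) (hM : M.IsHermitian) :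
    (M * X * M).IsHermitian := by
  have := Matrix.isHermitian_conjTranspose_mul_mul M hX
  rwa [hM.eq] at this

lemma wgmean_isHermitian {S T : Matrix l l ℂ} (hS : S.PosDef) (hT : T.PosSemidef) :
    (wgmean S T (1/2)).IsHermitian := by
  have hR : (mrpow (mrpow S (-(1/2)) * T * mrpow S (-(1/2))) (1/2)).IsHermitian :=
    mrpow_isHermitian (conj_psd hT (mrpow_isHermitian hS.1 (-(1/2)))).1 _
  exact conj_herm hR (mrpow_isHermitian hS.1 (1/2))

lemma riccati {S T : Matrix l l ℂ} (hS : S.PosDef) (hT : T.PosSemidef) :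
    wgmean S T (1/2) * S⁻¹ * wgmean S T (1/2) = T := by
  set P := mrpow S (1/2) with hP
  set Q := mrpow S (-(1/2)) with hQ
  set R := mrpow (Q * T * Q) (1/2) with hR
  have hC : (Q * T * Q).PosSemidef := conj_psd hT (mrpow_isHermitian hS.1 (-(1/2)))
  have hRR : R * R = Q * T * Q := mrpow_half_mul_self hC
  show P * R * P * S⁻¹ * (P * R * P) = T
  calc P * R * P * S⁻¹ * (P * R * P)
      = P * R * ((P * Q) * (Q * P)) * R * P := by rw [inv_eq_QQ hS]; noncomm_ring
    _ = P * (R * R) * P := by rw [PQ_one hS, QP_one hS]; noncomm_ring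
    _ = (P * Q) * T * (Q * P) := by rw [hRR]; noncomm_ring
    _ = T := by rw [PQ_one hS, QP_one hS, one_mul, mul_one]

end GmHelp

namespace GmHelp

variable {l : Type*} [Fintype l] [DecidableEq l]

omit [DecidableEq l] in
lemma herm_dot {M : Matrix l l ℂ} (hM : M.IsHermitian) (x y : l → ℂ) :
    dotProduct (star (M *ᵥ x)) y = dotProduct (star x) (M *ᵥ y) := by
  rw [Matrix.star_mulVec, ← Matrix.dotProduct_mulVec, hM.eq]

lemma sub_posSemidef_of_sq_le {C D Y : Matrix l l ℂ} (hD : D.PosSemidef) (hY : Y.IsHermitian)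
    (hsq : D * D = C) (hCY : (C - Y * Y).PosSemidef) : (D - Y).PosSemidef := by
  have hH : (D - Y).IsHermitian := hD.1.sub hY
  apply hH.posSemidef_iff_eigenvalues_nonneg.mpr
  intro i
  by_contra hneg
  push_neg at hneg
  set t : ℝ := hH.eigenvalues i with ht
  set v : l → ℂ := ⇑(hH.eigenvectorBasis i) with hv
  have hv0 : v ≠ 0 := fun h => hH.eigenvectorBasis.orthonormal.ne_zero i (WithLp.ofLp_injective 2 h)
  have hmul : (D - Y) *ᵥ v = (t : ℂ) • v := by
    have h1 := hH.mulVec_eigenvectorBasis i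
    rw [← hv, ← ht] at h1
    rw [h1]
    funext j
    simp [Complex.real_smul]
  set u : l → ℂ := D *ᵥ v with hu
  have hw : Y *ᵥ v = u - (t : ℂ) • v := by
    have h2 : u - Y *ᵥ v = (t : ℂ) • v := by rw [hu, ← Matrix.sub_mulVec]; exact hmul
    rw [← h2, sub_sub_cancel]
  set a : ℂ := dotProduct (star v) u with ha
  set nrm : ℂ := dotProduct (star v) v with hnrm
  have ha0 : 0 ≤ a := hD.dotProduct_mulVec_nonneg v
  have hnrm0 : 0 < nrm := by
    refine lt_of_le_of_ne (dotProduct_star_self_nonneg v) ?_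
    intro h
    exact hv0 (dotProduct_star_self_eq_zero.mp h.symm)
  have e3 : dotProduct (star u) v = a := by
    rw [hu, herm_dot hD.1, ha]
  have e2 : dotProduct (star v) (C *ᵥ v) = dotProduct (star u) u := by
    rw [← hsq, ← Matrix.mulVec_mulVec, ← herm_dot hD.1, hu]
  have e4 : dotProduct (star (Y *ᵥ v)) (Y *ᵥ v) =
      dotProduct (star u) u - 2 * (t : ℂ) * a + (t : ℂ) ^ 2 * nrm := by
    rw [hw, star_sub, star_smul, sub_dotProduct, dotProduct_sub,
      dotProduct_sub, smul_dotProduct, smul_dotProduct,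
      dotProduct_smul, dotProduct_smul, e3]
    rw [← ha, ← hnrm]
    simp only [smul_eq_mul, star_trivial, RCLike.star_def, Complex.conj_ofReal]
    ring
  have key : (0 : ℂ) ≤ 2 * (t : ℂ) * a - (t : ℂ) ^ 2 * nrm := by
    have h0 := hCY.dotProduct_mulVec_nonneg v
    have e1 : dotProduct (star v) ((C - Y * Y) *ᵥ v) =
        2 * (t : ℂ) * a - (t : ℂ) ^ 2 * nrm := by
      rw [Matrix.sub_mulVec, dotProduct_sub, ← Matrix.mulVec_mulVec,
        ← herm_dot hY, e4, e2]
      ring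
    rwa [e1] at h0
  rw [Complex.le_def] at key
  obtain ⟨hre, -⟩ := key
  have haim : a.im = 0 := by
    rw [Complex.le_def] at ha0; simpa using ha0.2.symm
  have hare : 0 ≤ a.re := by
    rw [Complex.le_def] at ha0; simpa using ha0.1
  have hnre : 0 < nrm.re := by
    rw [Complex.lt_def] at hnrm0; simpa using hnrm0.1
  have hnim : nrm.im = 0 := by
    rw [Complex.lt_def] at hnrm0; simpa using hnrm0.2.symm
  have hre' : (0 : ℝ) ≤ 2 * t * a.re - t ^ 2 * nrm.re := by
    have heq : 2 * (t : ℂ) * a - (t : ℂ) ^ 2 * nrm =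
        ((2 * t : ℝ) : ℂ) * a - ((t ^ 2 : ℝ) : ℂ) * nrm := by push_cast; ring
    rw [heq] at hre
    simpa [Complex.sub_re, Complex.mul_re, haim, hnim, ← Complex.ofReal_pow] using hre
  nlinarith [mul_pos (mul_self_pos.mpr (ne_of_lt hneg)) hnre, mul_nonneg (le_of_lt (neg_pos.mpr hneg)) hare]

end GmHelp

namespace GmHelp

variable {l : Type*} [Fintype l] [DecidableEq l]

lemma le_wgmean {S T X : Matrix l l ℂ} (hS : S.PosDef) (hT : T.PosSemidef) (hX : X.IsHermitian)
    (h : (T - X * S⁻¹ * X).PosSemidef) : (wgmean S T (1/2) - X).PosSemidef := by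
  have hPh : (mrpow S (1/2)).IsHermitian := mrpow_isHermitian hS.1 _
  have hQh : (mrpow S (-(1/2))).IsHermitian := mrpow_isHermitian hS.1 _
  set P := mrpow S (1/2) with hPdef
  set Q := mrpow S (-(1/2)) with hQdef
  have hC : (Q * T * Q).PosSemidef := conj_psd hT hQh
  set D := mrpow (Q * T * Q) (1/2) with hDdef
  set Y := Q * X * Q with hYdef
  have hYh : Y.IsHermitian := conj_herm hX hQh
  have hDpsd : D.PosSemidef := mrpow_posSemidef hC _
  have hsq : D * D = Q * T * Q := mrpow_half_mul_self hC
  have hconj : Q * (T - X * S⁻¹ * X) * Q = (Q * T * Q) - Y * Y := by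
    rw [inv_eq_QQ hS, hYdef]
    noncomm_ring
  have hCY : ((Q * T * Q) - Y * Y).PosSemidef := by
    have := conj_psd h hQh
    rwa [hconj] at this
  have hDY := sub_posSemidef_of_sq_le hDpsd hYh hsq hCY
  have hX' : P * Y * P = X := by
    rw [hYdef]
    calc P * (Q * X * Q) * P = (P * Q) * X * (Q * P) := by noncomm_ring
      _ = X := by rw [PQ_one hS, QP_one hS, one_mul, mul_one]
  have hfin : wgmean S T (1/2) - X = P * (D - Y) * P := by
    show P * D * P - X = P * (D - Y) * P
    rw [← hX']
    noncomm_ring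
  rw [hfin]
  have := hDY.mul_mul_conjTranspose_same P
  rwa [hPh.eq] at this

lemma posSemidef_sum {ι : Type*} (s : Finset ι) (f : ι → Matrix l l ℂ)
    (h : ∀ i ∈ s, (f i).PosSemidef) : (∑ i ∈ s, f i).PosSemidef :=
  Finset.sum_induction f _ (fun _ _ ha hb => ha.add hb) Matrix.PosSemidef.zero h

lemma wgmean_zero_zero : (wgmean (0 : Matrix l l ℂ) 0 (1/2)).PosSemidef := by
  have h0 : (0 : Matrix l l ℂ).IsHermitian := Matrix.isHermitian_zero
  have hz : mrpow (0 : Matrix l l ℂ) (-(1/2)) * 0 * mrpow (0 : Matrix l l ℂ) (-(1/2)) = 0 := by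
    rw [Matrix.mul_zero, Matrix.zero_mul]
  show (mrpow (0 : Matrix l l ℂ) (1/2) *
      mrpow (mrpow (0 : Matrix l l ℂ) (-(1/2)) * 0 * mrpow (0 : Matrix l l ℂ) (-(1/2))) (1/2) *
      mrpow (0 : Matrix l l ℂ) (1/2)).PosSemidef
  rw [hz]
  exact conj_psd (mrpow_posSemidef Matrix.PosSemidef.zero _) (mrpow_isHermitian h0 _)

end GmHelp


theorem gmean_superadditive {l : Type*} [Fintype l] [DecidableEq l] (m : ℕ)
    (A B : Fin m → Matrix l l ℂ) (hA : ∀ j, (A j).PosDef) (hB : ∀ j, (B j).PosDef) :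
    loewnerLE (∑ j, wgmean (A j) (B j) (1/2)) (wgmean (∑ j, A j) (∑ j, B j) (1/2)) := by
  classical
  rcases Nat.eq_zero_or_pos m with rfl | hm
  · simp only [Finset.univ_eq_empty, Finset.sum_empty]
    show (wgmean (0 : Matrix l l ℂ) 0 (1/2) - 0).PosSemidef
    rw [sub_zero]
    exact GmHelp.wgmean_zero_zero
  · set G : Fin m → Matrix l l ℂ := fun j => wgmean (A j) (B j) (1/2) with hG
    set i0 : Fin m := ⟨0, hm⟩
    have hS : (∑ j, A j).PosDef := by
      rw [← Finset.add_sum_erase _ _ (Finset.mem_univ i0)]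
      exact (hA i0).add_posSemidef
        (GmHelp.posSemidef_sum _ _ fun j _ => (hA j).posSemidef)
    have hT : (∑ j, B j).PosSemidef :=
      GmHelp.posSemidef_sum _ _ fun j _ => (hB j).posSemidef
    have hGh : ∀ j, (G j).IsHermitian :=
      fun j => GmHelp.wgmean_isHermitian (hA j) (hB j).posSemidef
    have hXh : (∑ j, G j).IsHermitian := by
      show (∑ j, G j)ᴴ = ∑ j, G j
      rw [Matrix.conjTranspose_sum]
      exact Finset.sum_congr rfl fun j _ => (hGh j).eq
    have hblock : ∀ j, (Matrix.fromBlocks (A j) (G j) ((G j)ᴴ) (B j)).PosSemidef := by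
      intro j
      haveI := (hA j).isUnit.invertible
      rw [Matrix.PosDef.fromBlocks₁₁ _ _ (hA j)]
      rw [(hGh j).eq, hG]
      simp only
      rw [GmHelp.riccati (hA j) (hB j).posSemidef, sub_self]
      exact Matrix.PosSemidef.zero
    have hsum : (Matrix.fromBlocks (∑ j, A j) (∑ j, G j) ((∑ j, G j)ᴴ) (∑ j, B j)).PosSemidef := by
      have heq : Matrix.fromBlocks (∑ j, A j) (∑ j, G j) ((∑ j, G j)ᴴ) (∑ j, B j)
          = ∑ j, Matrix.fromBlocks (A j) (G j) ((G j)ᴴ) (B j) := by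
        rw [Matrix.conjTranspose_sum]
        ext (i | i) (k | k) <;>
          simp [Matrix.sum_apply]
      rw [heq]
      exact GmHelp.posSemidef_sum _ _ fun j _ => hblock j
    haveI := hS.isUnit.invertible
    rw [Matrix.PosDef.fromBlocks₁₁ _ _ hS, hXh.eq] at hsum
    exact GmHelp.le_wgmean hS hT hXh hsum
end

section
/- Callebaut inequality for weighted geometric means (upper part): for positive definite matrices A_1,...,A_m, B_1,...,B_m and s ∈ [0,1], one has (∑_{j=1}^m A_j ♯_s B_j) ♯ (∑_{j=1}^m A_j ♯_(1-s) B_j) ≤ (∑_{j=1}^m A_j) ♯ (∑_{j=1}^m B_j) in the Loewner order. -/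
open Matrix Finset
open scoped ComplexOrder

open Polynomial

namespace Callebaut

variable {l : Type*} [Fintype l] [DecidableEq l]

/-- Conjugation by a unitary matrix as an `ℝ`-algebra homomorphism. -/
noncomputable def conjAlg (U : Matrix l l ℂ) (h1 : U * star U = 1) (h2 : star U * U = 1) :
    Matrix l l ℂ →ₐ[ℝ] Matrix l l ℂ where
  toFun X := U * X * star U
  map_one' := by rw [mul_one, h1]
  map_mul' X Y := by
    simp only [Matrix.mul_assoc]
    rw [← Matrix.mul_assoc (star U) U, h2, one_mul]
  map_zero' := by simp
  map_add' X Y := by rw [Matrix.mul_add, Matrix.add_mul]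
  commutes' r := by
    rw [Algebra.algebraMap_eq_smul_one, Matrix.mul_smul, mul_one, Matrix.smul_mul, h1]

lemma aeval_unitary_conj (p : ℝ[X]) {U D : Matrix l l ℂ} (h1 : U * star U = 1)
    (h2 : star U * U = 1) :
    Polynomial.aeval (U * D * star U) p = U * Polynomial.aeval D p * star U :=
  Polynomial.aeval_algHom_apply (conjAlg U h1 h2) D p

lemma aeval_diagonal (p : ℝ[X]) (d : l → ℂ) :
    Polynomial.aeval (Matrix.diagonal d) p
      = Matrix.diagonal (fun i => Polynomial.aeval (d i) p) := by
  have h := Polynomial.aeval_algHom_apply (Matrix.diagonalAlgHom (n := l) (α := ℂ) ℝ) d p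
  have hd : ∀ v : l → ℂ, Matrix.diagonalAlgHom (n := l) (α := ℂ) ℝ v = Matrix.diagonal v :=
    fun _ => rfl
  rw [hd] at h
  have h2 : (Polynomial.aeval d) p = fun i => Polynomial.aeval (d i) p :=
    funext fun i => (Polynomial.aeval_algHom_apply (Pi.evalAlgHom ℝ (fun _ : l => ℂ) i) d p :
      Polynomial.aeval (d i) p = Polynomial.aeval d p i).symm
  rw [h, h2, hd]

lemma aeval_ofReal (p : ℝ[X]) (x : ℝ) :
    Polynomial.aeval ((x : ℂ)) p = ((p.eval x : ℝ) : ℂ) := by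
  have h := Polynomial.aeval_algHom_apply (Complex.ofRealAm) x p
  simpa using h

lemma exists_interp (s : Finset ℝ) (g : ℝ → ℝ) : ∃ p : ℝ[X], ∀ x ∈ s, p.eval x = g x :=
  ⟨Lagrange.interpolate s id g, fun x hx =>
    Lagrange.eval_interpolate_at_node g (Set.injOn_id _) hx⟩

theorem mrpow_eq_spectral {C : Matrix l l ℂ} (hC : C.IsHermitian) (r : ℝ)
    {U : Matrix l l ℂ} (h1 : U * star U = 1) (h2 : star U * U = 1) {lam : l → ℝ}
    (hdec : C = U * Matrix.diagonal (fun i => (lam i : ℂ)) * star U) :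
    mrpow C r = U * Matrix.diagonal (fun i => ((lam i ^ r : ℝ) : ℂ)) * star U := by
  classical
  obtain ⟨p, hp⟩ := exists_interp
    ((Finset.univ.image lam) ∪ (Finset.univ.image hC.eigenvalues)) (fun x => x ^ r)
  set V : Matrix l l ℂ := (hC.eigenvectorUnitary : Matrix l l ℂ) with hV
  have hV1 : V * star V = 1 := (Matrix.mem_unitaryGroup_iff).mp hC.eigenvectorUnitary.2
  have hV2 : star V * V = 1 := (Matrix.mem_unitaryGroup_iff').mp hC.eigenvectorUnitary.2
  have key : ∀ (W : Matrix l l ℂ), W * star W = 1 → star W * W = 1 →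
      ∀ (mu : l → ℝ), (∀ i, p.eval (mu i) = mu i ^ r) →
      C = W * Matrix.diagonal (fun i => (mu i : ℂ)) * star W →
      W * Matrix.diagonal (fun i => ((mu i ^ r : ℝ) : ℂ)) * star W = Polynomial.aeval C p := by
    intro W hW1 hW2 mu hmu hd
    rw [hd, aeval_unitary_conj p hW1 hW2, aeval_diagonal]
    have : (fun i => Polynomial.aeval ((mu i : ℂ)) p) = fun i => ((mu i ^ r : ℝ) : ℂ) := by
      funext i
      rw [aeval_ofReal, hmu i]
    rw [this]
  have hspec : C = V * Matrix.diagonal (fun i => ((hC.eigenvalues i : ℝ) : ℂ)) * star V := by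
    exact hC.spectral_theorem
  have e1 := key V hV1 hV2 hC.eigenvalues
    (fun i => hp _ (Finset.mem_union_right _ (Finset.mem_image_of_mem _ (Finset.mem_univ i)))) hspec
  have e2 := key U h1 h2 lam
    (fun i => hp _ (Finset.mem_union_left _ (Finset.mem_image_of_mem _ (Finset.mem_univ i)))) hdec
  rw [mrpow, dif_pos hC]
  rw [← hV] at *
  rw [e1, ← e2]

/-- congruence keeps PosDef -/
lemma posDef_conj {A : Matrix l l ℂ} (hA : A.PosDef) {B : Matrix l l ℂ} (hB : IsUnit B) :
    (Bᴴ * A * B).PosDef := by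
  refine Matrix.posDef_iff_dotProduct_mulVec.mpr ⟨Matrix.isHermitian_conjTranspose_mul_mul B hA.1, fun x hx => ?_⟩
  have hBx : B *ᵥ x ≠ 0 := fun h => hx (by
    have := Matrix.mulVec_injective_iff_isUnit.mpr hB (show B *ᵥ x = B *ᵥ 0 by simpa using h)
    simpa using this)
  have := (Matrix.posDef_iff_dotProduct_mulVec.mp hA).2 (x := B *ᵥ x) hBx
  simpa only [star_mulVec, Matrix.dotProduct_mulVec, Matrix.vecMul_vecMul, Matrix.mul_assoc]
    using this

lemma posDef_unitary_conj {D V : Matrix l l ℂ} (hD : D.PosDef)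
    (h1 : V * star V = 1) (h2 : star V * V = 1) : (V * D * star V).PosDef := by
  letI : Invertible (star V) := ⟨V, h1, h2⟩
  have : ((star V)ᴴ * D * star V).PosDef := posDef_conj hD (isUnit_of_invertible (star V))
  simpa [Matrix.star_eq_conjTranspose] using this


variable {C H : Matrix l l ℂ}

lemma eU_mul_star (hC : C.IsHermitian) :
    (hC.eigenvectorUnitary : Matrix l l ℂ) * star (hC.eigenvectorUnitary : Matrix l l ℂ) = 1 :=
  Matrix.mem_unitaryGroup_iff.mp hC.eigenvectorUnitary.2

lemma star_mul_eU (hC : C.IsHermitian) :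
    star (hC.eigenvectorUnitary : Matrix l l ℂ) * (hC.eigenvectorUnitary : Matrix l l ℂ) = 1 :=
  Matrix.mem_unitaryGroup_iff'.mp hC.eigenvectorUnitary.2

lemma spectral (hC : C.IsHermitian) :
    C = (hC.eigenvectorUnitary : Matrix l l ℂ) *
      Matrix.diagonal (fun i => ((hC.eigenvalues i : ℝ) : ℂ)) *
      star (hC.eigenvectorUnitary : Matrix l l ℂ) := by
  exact hC.spectral_theorem

lemma conj_mul_conj (V X Y : Matrix l l ℂ) (h2 : star V * V = 1) :
    (V * X * star V) * (V * Y * star V) = V * (X * Y) * star V := by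
  simp only [Matrix.mul_assoc]
  rw [← Matrix.mul_assoc (star V) V, h2, one_mul]

lemma diagonal_congr {f g : l → ℂ} (h : ∀ i, f i = g i) :
    Matrix.diagonal f = Matrix.diagonal g := by
  rw [funext h]

lemma mrpow_isHermitian (hC : C.IsHermitian) (r : ℝ) : (mrpow C r).IsHermitian := by
  rw [mrpow, dif_pos hC, Matrix.star_eq_conjTranspose]
  exact Matrix.isHermitian_mul_mul_conjTranspose _
    (Matrix.isHermitian_diagonal_of_self_adjoint _
      (funext fun i => Complex.conj_ofReal _))

lemma mrpow_posSemidef (hC : C.PosSemidef) (r : ℝ) : (mrpow C r).PosSemidef := by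
  rw [mrpow, dif_pos hC.1, Matrix.star_eq_conjTranspose]
  exact (Matrix.posSemidef_diagonal_iff.mpr fun i =>
    Complex.zero_le_real.mpr (Real.rpow_nonneg (hC.eigenvalues_nonneg i) r)
    ).mul_mul_conjTranspose_same _

lemma mrpow_posDef (hC : C.PosDef) (r : ℝ) : (mrpow C r).PosDef := by
  rw [mrpow, dif_pos hC.1]
  exact posDef_unitary_conj
    (Matrix.posDef_diagonal_iff.mpr fun i =>
      Complex.zero_lt_real.mpr (Real.rpow_pos_of_pos (hC.eigenvalues_pos i) r))
    (eU_mul_star hC.1) (star_mul_eU hC.1)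

lemma mrpow_add (hC : C.PosDef) (r s : ℝ) : mrpow C r * mrpow C s = mrpow C (r + s) := by
  simp only [mrpow, dif_pos hC.1]
  rw [conj_mul_conj _ _ _ (star_mul_eU hC.1), Matrix.diagonal_mul_diagonal]
  congr 1
  congr 1
  exact diagonal_congr fun i => by
    rw [← Complex.ofReal_mul, ← Real.rpow_add (hC.eigenvalues_pos i)]

lemma mrpow_zero (hC : C.IsHermitian) : mrpow C 0 = 1 := by
  rw [mrpow, dif_pos hC]
  simp only [Real.rpow_zero, Complex.ofReal_one, Matrix.diagonal_one, mul_one]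
  exact eU_mul_star hC

lemma mrpow_one (hC : C.IsHermitian) : mrpow C 1 = C := by
  rw [mrpow, dif_pos hC]
  simp only [Real.rpow_one]
  exact (spectral hC).symm

lemma mrpow_mrpow (hC : C.PosDef) (r s : ℝ) : mrpow (mrpow C r) s = mrpow C (r * s) := by
  have h1 : mrpow (mrpow C r) s = (hC.1.eigenvectorUnitary : Matrix l l ℂ) *
      Matrix.diagonal (fun i => (((hC.1.eigenvalues i ^ r) ^ s : ℝ) : ℂ)) *
      star (hC.1.eigenvectorUnitary : Matrix l l ℂ) := by
    refine mrpow_eq_spectral (mrpow_isHermitian hC.1 r) s (eU_mul_star hC.1) (star_mul_eU hC.1)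
      (lam := fun i => hC.1.eigenvalues i ^ r) ?_
    rw [mrpow, dif_pos hC.1]
  rw [h1, mrpow, dif_pos hC.1]
  congr 1
  congr 1
  exact diagonal_congr fun i => by
    rw [← Real.rpow_mul (hC.eigenvalues_pos i).le]

lemma mrpow_neg_one (hC : C.PosDef) : mrpow C (-1) = C⁻¹ := by
  refine (Matrix.inv_eq_right_inv ?_).symm
  calc C * mrpow C (-1) = mrpow C 1 * mrpow C (-1) := by rw [mrpow_one hC.1]
  _ = mrpow C (1 + -1) := mrpow_add hC 1 (-1)
  _ = 1 := by norm_num; exact mrpow_zero hC.1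

lemma mrpow_half_sq (hH : H.PosDef) : mrpow (H * H) (1/2) = H := by
  have hHH : (H * H).IsHermitian := by
    have := hH.1
    unfold Matrix.IsHermitian at *
    rw [Matrix.conjTranspose_mul, this]
  have hdec : H * H = (hH.1.eigenvectorUnitary : Matrix l l ℂ) *
      Matrix.diagonal (fun i => ((hH.1.eigenvalues i * hH.1.eigenvalues i : ℝ) : ℂ)) *
      star (hH.1.eigenvectorUnitary : Matrix l l ℂ) := by
    rw [show H * H = ((hH.1.eigenvectorUnitary : Matrix l l ℂ) *
        Matrix.diagonal (fun i => ((hH.1.eigenvalues i : ℝ) : ℂ)) *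
        star (hH.1.eigenvectorUnitary : Matrix l l ℂ)) *
        ((hH.1.eigenvectorUnitary : Matrix l l ℂ) *
        Matrix.diagonal (fun i => ((hH.1.eigenvalues i : ℝ) : ℂ)) *
        star (hH.1.eigenvectorUnitary : Matrix l l ℂ)) by rw [← spectral hH.1]]
    rw [conj_mul_conj _ _ _ (star_mul_eU hH.1), Matrix.diagonal_mul_diagonal]
    congr 1
    congr 1
    exact diagonal_congr fun i => by rw [← Complex.ofReal_mul]
  rw [mrpow_eq_spectral hHH (1/2) (eU_mul_star hH.1) (star_mul_eU hH.1) hdec]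
  have : (fun i => (((hH.1.eigenvalues i * hH.1.eigenvalues i) ^ ((1:ℝ)/2) : ℝ) : ℂ))
      = fun i => ((hH.1.eigenvalues i : ℝ) : ℂ) := by
    funext i
    have hx := hH.eigenvalues_pos i
    rw [show hH.1.eigenvalues i * hH.1.eigenvalues i = hH.1.eigenvalues i ^ (2:ℝ) by
      rw [show (2:ℝ) = ((2:ℕ):ℝ) by norm_num, Real.rpow_natCast]; ring]
    rw [← Real.rpow_mul hx.le]
    norm_num
  rw [this, ← spectral hH.1]


section gmean
variable {M N K R : Matrix l l ℂ}

lemma cancel_left {P Q : Matrix l l ℂ} (h : P * Q = 1) (X : Matrix l l ℂ) :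
    P * (Q * X) = X := by rw [← Matrix.mul_assoc, h, one_mul]

lemma sandwich {T Ti : Matrix l l ℂ} (hTTi : T * Ti = 1) (hTiT : Ti * T = 1)
    (N : Matrix l l ℂ) : T * (Ti * N * Ti) * T = N := by
  simp only [Matrix.mul_assoc]
  rw [hTiT, mul_one, ← Matrix.mul_assoc, hTTi, one_mul]

/-- congruence by an invertible Hermitian matrix preserves PosDef -/
lemma posDef_herm_conj {P B : Matrix l l ℂ} (hP : P.PosDef) (hB : B.IsHermitian)
    (hBu : IsUnit B) : (B * P * B).PosDef := by
  have h := posDef_conj hP hBu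
  rwa [hB.eq] at h

lemma T_mul_Ti (hM : M.PosDef) : mrpow M (1/2) * mrpow M (-(1/2)) = 1 := by
  rw [mrpow_add hM, show (1/2 + -(1/2) : ℝ) = 0 by norm_num, mrpow_zero hM.1]

lemma Ti_mul_T (hM : M.PosDef) : mrpow M (-(1/2)) * mrpow M (1/2) = 1 := by
  rw [mrpow_add hM, show (-(1/2) + 1/2 : ℝ) = 0 by norm_num, mrpow_zero hM.1]

lemma Ti_mul_Ti (hM : M.PosDef) : mrpow M (-(1/2)) * mrpow M (-(1/2)) = M⁻¹ := by
  rw [mrpow_add hM, show (-(1/2) + -(1/2) : ℝ) = -1 by norm_num, mrpow_neg_one hM]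

lemma inner_posDef (hM : M.PosDef) (hN : N.PosDef) :
    (mrpow M (-(1/2)) * N * mrpow M (-(1/2))).PosDef :=
  posDef_herm_conj hN (mrpow_isHermitian hM.1 _) (mrpow_posDef hM _).isUnit

lemma wgmean_posDef (hM : M.PosDef) (hN : N.PosDef) (t : ℝ) : (wgmean M N t).PosDef :=
  posDef_herm_conj (mrpow_posDef (inner_posDef hM hN) t)
    (mrpow_isHermitian hM.1 _) (mrpow_posDef hM _).isUnit

lemma gmean_eq (hM : M.PosDef) (hN : N.PosDef) :
    wgmean M N (1/2) * M⁻¹ * wgmean M N (1/2) = N := by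
  have hC := inner_posDef hM hN
  set Ti := mrpow M (-(1/2)) with hTi
  set T := mrpow M (1/2) with hT
  set C := Ti * N * Ti with hCdef
  set X := mrpow C (1/2) with hX
  have e1 : T * M⁻¹ * T = 1 := by
    rw [← mrpow_neg_one hM, hT, mrpow_add hM, mrpow_add hM,
      show (1/2 + -1 + 1/2 : ℝ) = 0 by norm_num, mrpow_zero hM.1]
  have key : ∀ Y : Matrix l l ℂ, T * (M⁻¹ * (T * Y)) = Y := by
    intro Y
    have : T * (M⁻¹ * (T * Y)) = (T * M⁻¹ * T) * Y := by simp only [Matrix.mul_assoc]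
    rw [this, e1, one_mul]
  show (T * X * T) * M⁻¹ * (T * X * T) = N
  have e2 : (T * X * T) * M⁻¹ * (T * X * T) = T * (X * (T * (M⁻¹ * (T * (X * T))))) := by
    simp only [Matrix.mul_assoc]
  rw [e2, key (X * T), ← Matrix.mul_assoc X X T, hX, mrpow_add hC,
    show (1/2 + 1/2 : ℝ) = 1 by norm_num, mrpow_one hC.1, ← Matrix.mul_assoc, hCdef,
    sandwich (T_mul_Ti hM) (Ti_mul_T hM)]

lemma gmean_unique (hM : M.PosDef) (hN : N.PosDef) (hK : K.PosDef)
    (hKe : K * M⁻¹ * K = N) : K = wgmean M N (1/2) := by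
  set Ti := mrpow M (-(1/2)) with hTi
  set T := mrpow M (1/2) with hT
  set H := Ti * K * Ti with hH
  have hHpd : H.PosDef :=
    posDef_herm_conj hK (mrpow_isHermitian hM.1 _) (mrpow_posDef hM _).isUnit
  have hHH : H * H = Ti * N * Ti := by
    have e1 : (Ti * K * Ti) * (Ti * K * Ti) = Ti * (K * (Ti * (Ti * (K * Ti)))) := by
      simp only [Matrix.mul_assoc]
    have e2 : Ti * (Ti * (K * Ti)) = M⁻¹ * (K * Ti) := by
      rw [← Matrix.mul_assoc, Ti_mul_Ti hM]
    have e3 : K * (M⁻¹ * (K * Ti)) = (K * M⁻¹ * K) * Ti := by simp only [Matrix.mul_assoc]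
    rw [hH, e1, e2, e3, hKe, ← Matrix.mul_assoc]
  have hHm : H = mrpow (Ti * N * Ti) (1/2) := by
    rw [← hHH, mrpow_half_sq hHpd]
  have : T * H * T = K := by rw [hH, sandwich (T_mul_Ti hM) (Ti_mul_T hM)]
  rw [← this, hHm]
  rfl

lemma gmean_congr (hM : M.PosDef) (hN : N.PosDef) (hR : IsUnit R.det) :
    wgmean (R * M * Rᴴ) (R * N * Rᴴ) (1/2) = R * wgmean M N (1/2) * Rᴴ := by
  have hRH : IsUnit (Rᴴ).det := by rw [Matrix.det_conjTranspose]; exact hR.star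
  have hRu : IsUnit R := (Matrix.isUnit_iff_isUnit_det R).mpr hR
  have hRHu : IsUnit (Rᴴ) := (Matrix.isUnit_iff_isUnit_det _).mpr hRH
  have hMc : (R * M * Rᴴ).PosDef := by
    have := posDef_conj hM hRHu
    rwa [Matrix.conjTranspose_conjTranspose] at this
  have hNc : (R * N * Rᴴ).PosDef := by
    have := posDef_conj hN hRHu
    rwa [Matrix.conjTranspose_conjTranspose] at this
  have hG := wgmean_posDef hM hN (1/2)
  have hKpd : (R * wgmean M N (1/2) * Rᴴ).PosDef := by
    have := posDef_conj hG hRHu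
    rwa [Matrix.conjTranspose_conjTranspose] at this
  refine (gmean_unique hMc hNc hKpd ?_).symm
  set G := wgmean M N (1/2) with hGdef
  have h1 : Rᴴ * ((Rᴴ)⁻¹ * (M⁻¹ * (R⁻¹ * (R * (G * Rᴴ))))) =
      M⁻¹ * (R⁻¹ * (R * (G * Rᴴ))) := cancel_left (Matrix.mul_nonsing_inv _ hRH) _
  have h2 : R⁻¹ * (R * (G * Rᴴ)) = G * Rᴴ := cancel_left (Matrix.nonsing_inv_mul _ hR) _
  calc (R * G * Rᴴ) * (R * M * Rᴴ)⁻¹ * (R * G * Rᴴ)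
      = R * (G * (Rᴴ * ((Rᴴ)⁻¹ * (M⁻¹ * (R⁻¹ * (R * (G * Rᴴ))))))) := by
        rw [Matrix.mul_inv_rev, Matrix.mul_inv_rev]
        simp only [Matrix.mul_assoc]
    _ = R * (G * (M⁻¹ * (G * Rᴴ))) := by rw [h1, h2]
    _ = R * (G * M⁻¹ * G) * Rᴴ := by simp only [Matrix.mul_assoc]
    _ = R * N * Rᴴ := by rw [gmean_eq hM hN]

lemma mrpow_inv (hC : C.PosDef) (p : ℝ) : (mrpow C p)⁻¹ = mrpow C (-p) := by
  refine Matrix.inv_eq_right_inv ?_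
  rw [mrpow_add hC, show (p + -p : ℝ) = 0 by ring, mrpow_zero hC.1]

lemma gmean_comm_powers (hC : C.PosDef) (p q : ℝ) :
    wgmean (mrpow C p) (mrpow C q) (1/2) = mrpow C ((p + q)/2) := by
  refine (gmean_unique (mrpow_posDef hC p) (mrpow_posDef hC q)
    (mrpow_posDef hC ((p + q)/2)) ?_).symm
  rw [mrpow_inv hC, mrpow_add hC, mrpow_add hC,
    show ((p + q)/2 + -p + (p + q)/2 : ℝ) = q by ring]

lemma gmean_wgmean (hM : M.PosDef) (hN : N.PosDef) (p q : ℝ) :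
    wgmean (wgmean M N p) (wgmean M N q) (1/2) = wgmean M N ((p + q)/2) := by
  have hC := inner_posDef hM hN
  have hT : (mrpow M (1/2)).IsHermitian := mrpow_isHermitian hM.1 _
  have hTu : IsUnit (mrpow M (1/2)).det := (mrpow_posDef hM _).isUnit.map Matrix.detMonoidHom
  have ep : wgmean M N p = mrpow M (1/2) *
      mrpow (mrpow M (-(1/2)) * N * mrpow M (-(1/2))) p * (mrpow M (1/2))ᴴ := by
    rw [hT.eq]; rfl
  have eq' : wgmean M N q = mrpow M (1/2) *
      mrpow (mrpow M (-(1/2)) * N * mrpow M (-(1/2))) q * (mrpow M (1/2))ᴴ := by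
    rw [hT.eq]; rfl
  rw [ep, eq', gmean_congr (mrpow_posDef hC p) (mrpow_posDef hC q) hTu,
    gmean_comm_powers hC p q, hT.eq]
  rfl

end gmean

section loewner
variable {A B C' M N X Y Z : Matrix l l ℂ}

lemma loewnerLE_refl (A : Matrix l l ℂ) : loewnerLE A A := by
  rw [loewnerLE, sub_self]
  exact Matrix.PosSemidef.zero

lemma loewnerLE_trans (h1 : loewnerLE A B) (h2 : loewnerLE B C') : loewnerLE A C' := by
  rw [loewnerLE] at *
  have := h2.add h1
  rwa [sub_add_sub_cancel] at this

lemma loewnerLE_of_eq (h : A = B) : loewnerLE A B := h ▸ loewnerLE_refl A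

lemma loewnerLE_conj (h : loewnerLE A B) (X : Matrix l l ℂ) :
    loewnerLE (Xᴴ * A * X) (Xᴴ * B * X) := by
  rw [loewnerLE] at *
  have e : Xᴴ * B * X - Xᴴ * A * X = Xᴴ * (B - A) * X := by
    rw [Matrix.mul_sub, Matrix.sub_mul]
  rw [e]
  exact h.conjTranspose_mul_mul_same X

lemma loewnerLE_sum {m : ℕ} {f g : Fin m → Matrix l l ℂ}
    (h : ∀ j, loewnerLE (f j) (g j)) : loewnerLE (∑ j, f j) (∑ j, g j) := by
  rw [loewnerLE, ← Finset.sum_sub_distrib]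
  exact Finset.sum_induction _ _ (fun a b ha hb => ha.add hb) Matrix.PosSemidef.zero
    (fun j _ => h j)

lemma fromBlocks_sum {m : ℕ} (f g h k : Fin m → Matrix l l ℂ) :
    ∑ j, Matrix.fromBlocks (f j) (g j) (h j) (k j)
      = Matrix.fromBlocks (∑ j, f j) (∑ j, g j) (∑ j, h j) (∑ j, k j) := by
  ext x y
  cases x <;> cases y <;>
    simp [Matrix.fromBlocks, Matrix.sum_apply]

lemma fromBlocks_psd_diag {P Q : Matrix l l ℂ} (hP : P.PosSemidef) (hQ : Q.PosSemidef) :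
    (Matrix.fromBlocks P 0 0 Q).PosSemidef := by
  rw [Matrix.posSemidef_iff_dotProduct_mulVec]
  constructor
  · show _ = _
    rw [Matrix.fromBlocks_conjTranspose]
    simp only [Matrix.conjTranspose_zero]
    rw [hP.1.eq, hQ.1.eq]
  · intro x
    rw [Matrix.fromBlocks_mulVec]
    have hsx : star x = Sum.elim (star (x ∘ Sum.inl)) (star (x ∘ Sum.inr)) := by
      funext i; cases i <;> rfl
    rw [hsx]
    simp only [Matrix.zero_mulVec, add_zero, zero_add]
    rw [sumElim_dotProduct_sumElim]
    exact add_nonneg ((Matrix.posSemidef_iff_dotProduct_mulVec.mp hP).2 _) ((Matrix.posSemidef_iff_dotProduct_mulVec.mp hQ).2 _)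

end loewner


section sqrtmono

lemma herm_le_sqrt {C Z' : Matrix l l ℂ} (hC : C.PosDef) (hZ : Z'.IsHermitian)
    (h : loewnerLE (Z' * Z') C) : loewnerLE Z' (mrpow C (1/2)) := by
  set W := mrpow C (1/2) with hWdef
  have hWpd : W.PosDef := mrpow_posDef hC _
  have hWW : W * W = C := by
    rw [hWdef, mrpow_add hC, show (1/2 + 1/2 : ℝ) = 1 by norm_num, mrpow_one hC.1]
  have hM0 : (W - Z').IsHermitian := hWpd.1.sub hZ
  rw [loewnerLE]
  refine (Matrix.IsHermitian.posSemidef_iff_eigenvalues_nonneg hM0).mpr fun i => ?_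
  by_contra hneg
  push_neg at hneg
  set μ := hM0.eigenvalues i with hmu
  set v : l → ℂ := ⇑(hM0.eigenvectorBasis i) with hv
  have hv0 : v ≠ 0 := by
    intro h0
    refine hM0.eigenvectorBasis.orthonormal.ne_zero i ?_
    ext j
    exact congrFun h0 j
  have heig : (W - Z') *ᵥ v = μ • v := hM0.mulVec_eigenvectorBasis i
  set w := Z' *ᵥ v with hw
  set c : ℂ := (μ : ℂ) with hc
  have hsm : (μ • v : l → ℂ) = c • v := by
    funext j
    rw [Pi.smul_apply, Pi.smul_apply, hc, Complex.real_smul, smul_eq_mul]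
  have hWv : W *ᵥ v = w + c • v := by
    have h' := heig
    rw [Matrix.sub_mulVec, hsm, sub_eq_iff_eq_add] at h'
    rw [h', hw]
    ring
  have hstarc : star c = c := by rw [hc, Complex.star_def, Complex.conj_ofReal]
  have hd : star w ⬝ᵥ v = star v ⬝ᵥ w := by
    rw [hw, Matrix.star_mulVec, ← Matrix.dotProduct_mulVec, hZ.eq]
  have hqC : star v ⬝ᵥ (C *ᵥ v) = star (W *ᵥ v) ⬝ᵥ (W *ᵥ v) := by
    rw [← hWW, ← Matrix.mulVec_mulVec, Matrix.star_mulVec, hWpd.1.eq,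
      ← Matrix.dotProduct_mulVec, Matrix.dotProduct_mulVec, Matrix.dotProduct_mulVec]
  have hqZ : star v ⬝ᵥ ((Z' * Z') *ᵥ v) = star w ⬝ᵥ w := by
    rw [← Matrix.mulVec_mulVec, ← hw, Matrix.star_mulVec, hZ.eq,
      ← Matrix.dotProduct_mulVec, Matrix.dotProduct_mulVec, Matrix.dotProduct_mulVec]
  have hexp : star (W *ᵥ v) ⬝ᵥ (W *ᵥ v)
      = star w ⬝ᵥ w + c * (star w ⬝ᵥ v) + c * (star v ⬝ᵥ w) + c * (c * (star v ⬝ᵥ v)) := by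
    rw [hWv, star_add, star_smul, hstarc]
    simp only [add_dotProduct, dotProduct_add, smul_dotProduct,
      dotProduct_smul, smul_eq_mul]
    ring
  have hre : 0 ≤ (star v ⬝ᵥ ((C - Z' * Z') *ᵥ v)).re := by
    have h' := h.re_dotProduct_nonneg v
    simpa using h'
  have hkey : (star v ⬝ᵥ ((C - Z' * Z') *ᵥ v)).re
      = μ * (2 * (star v ⬝ᵥ w).re + μ * (star v ⬝ᵥ v).re) := by
    rw [Matrix.sub_mulVec, dotProduct_sub, hqC, hexp, hqZ, hd]
    have e2 : star w ⬝ᵥ w + c * (star v ⬝ᵥ w) + c * (star v ⬝ᵥ w) + c * (c * (star v ⬝ᵥ v))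
        - star w ⬝ᵥ w = c * (star v ⬝ᵥ w) + c * (star v ⬝ᵥ w) + c * (c * (star v ⬝ᵥ v)) := by
      ring
    rw [e2]
    simp only [Complex.add_re, hc, Complex.re_ofReal_mul]
    ring
  have hW0 : 0 < (star v ⬝ᵥ (W *ᵥ v)).re := by
    have h' := hWpd.re_dotProduct_pos hv0
    simpa using h'
  have hWsplit : (star v ⬝ᵥ (W *ᵥ v)).re = (star v ⬝ᵥ w).re + μ * (star v ⬝ᵥ v).re := by
    rw [hWv, dotProduct_add, dotProduct_smul, smul_eq_mul]
    simp only [Complex.add_re, hc, Complex.re_ofReal_mul]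
  have hn2 : 0 < (star v ⬝ᵥ v).re := by
    have h' : (0 : ℂ) < star v ⬝ᵥ v := Matrix.dotProduct_star_self_pos_iff.mpr hv0
    rw [Complex.lt_def] at h'
    simpa using h'.1
  rw [hkey] at hre
  rw [hWsplit] at hW0
  nlinarith [mul_pos (neg_pos.mpr hneg) hW0, mul_nonneg (mul_self_nonneg μ) hn2.le]

end sqrtmono


section blocks
variable {M N X Y X' Y' Z : Matrix l l ℂ}

lemma herm_sum {m : ℕ} {f : Fin m → Matrix l l ℂ} (h : ∀ j, (f j).IsHermitian) :
    (∑ j, f j).IsHermitian :=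
  Finset.sum_induction _ _ (fun a b ha hb => ha.add hb) Matrix.isHermitian_zero
    (fun j _ => h j)

lemma posDef_sum {m : ℕ} (hm : 0 < m) {f : Fin m → Matrix l l ℂ} (h : ∀ j, (f j).PosDef) :
    (∑ j, f j).PosDef := by
  cases m with
  | zero => exact absurd hm (lt_irrefl 0)
  | succ n =>
    rw [Fin.sum_univ_succ]
    exact (h 0).add_posSemidef
      (Finset.sum_induction _ _ (fun a b ha hb => ha.add hb) Matrix.PosSemidef.zero
        (fun j _ => (h j.succ).posSemidef))

lemma gmean_block (hM : M.PosDef) (hN : N.PosDef) :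
    (Matrix.fromBlocks M (wgmean M N (1/2)) (wgmean M N (1/2)) N).PosSemidef := by
  set G := wgmean M N (1/2) with hG
  have hGh : G.IsHermitian := (wgmean_posDef hM hN _).1
  letI := Matrix.invertibleOfIsUnitDet M ((Matrix.isUnit_iff_isUnit_det _).mp hM.isUnit)
  rw [show Matrix.fromBlocks M G G N = Matrix.fromBlocks M G Gᴴ N by rw [hGh.eq]]
  rw [Matrix.PosDef.fromBlocks₁₁ _ _ hM]
  have e : N - Gᴴ * M⁻¹ * G = 0 := by rw [hGh.eq, hG, gmean_eq hM hN, sub_self]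
  rw [e]
  exact Matrix.PosSemidef.zero

lemma le_gmean_of_block (hM : M.PosDef) (hN : N.PosDef) (hZ : Z.IsHermitian)
    (hblk : (Matrix.fromBlocks M Z Z N).PosSemidef) : loewnerLE Z (wgmean M N (1/2)) := by
  letI := Matrix.invertibleOfIsUnitDet M ((Matrix.isUnit_iff_isUnit_det _).mp hM.isUnit)
  have hblk' : (Matrix.fromBlocks M Z Zᴴ N).PosSemidef := by rw [hZ.eq]; exact hblk
  have hs : (N - Zᴴ * M⁻¹ * Z).PosSemidef := (Matrix.PosDef.fromBlocks₁₁ _ _ hM).mp hblk'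
  rw [hZ.eq] at hs
  set Ti := mrpow M (-(1/2)) with hTidef
  have hTih : Ti.IsHermitian := mrpow_isHermitian hM.1 _
  set Z2 := Ti * Z * Ti with hZ2
  have hZ2h : Z2.IsHermitian := by
    have h' := Matrix.isHermitian_mul_mul_conjTranspose Ti hZ
    rwa [hTih.eq] at h'
  have hCpd := inner_posDef hM hN
  have hconj : loewnerLE (Z2 * Z2) (Ti * N * Ti) := by
    have h' : loewnerLE (Z * M⁻¹ * Z) N := hs
    have h2 := loewnerLE_conj h' Ti
    rw [hTih.eq] at h2
    have e : Ti * (Z * M⁻¹ * Z) * Ti = Z2 * Z2 := by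
      rw [hZ2]
      have e2 : (Ti * Z * Ti) * (Ti * Z * Ti) = Ti * (Z * ((Ti * Ti) * (Z * Ti))) := by
        simp only [Matrix.mul_assoc]
      rw [e2, Ti_mul_Ti hM]
      simp only [Matrix.mul_assoc]
    rwa [e] at h2
  have hsq := herm_le_sqrt hCpd hZ2h hconj
  have hfin := loewnerLE_conj hsq (mrpow M (1/2))
  have hTh : (mrpow M (1/2)).IsHermitian := mrpow_isHermitian hM.1 _
  rw [hTh.eq] at hfin
  rw [hZ2, sandwich (T_mul_Ti hM) (Ti_mul_T hM)] at hfin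
  exact hfin

lemma gmean_superadd {m : ℕ} (hm : 0 < m) {P Q : Fin m → Matrix l l ℂ}
    (hP : ∀ j, (P j).PosDef) (hQ : ∀ j, (Q j).PosDef) :
    loewnerLE (∑ j, wgmean (P j) (Q j) (1/2)) (wgmean (∑ j, P j) (∑ j, Q j) (1/2)) := by
  have hPs : (∑ j, P j).PosDef := posDef_sum hm hP
  have hQs : (∑ j, Q j).PosDef := posDef_sum hm hQ
  apply le_gmean_of_block hPs hQs
    (herm_sum fun j => (wgmean_posDef (hP j) (hQ j) _).1)
  have e : Matrix.fromBlocks (∑ j, P j) (∑ j, wgmean (P j) (Q j) (1/2))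
      (∑ j, wgmean (P j) (Q j) (1/2)) (∑ j, Q j)
      = ∑ j, Matrix.fromBlocks (P j) (wgmean (P j) (Q j) (1/2))
          (wgmean (P j) (Q j) (1/2)) (Q j) := (fromBlocks_sum _ _ _ _).symm
  rw [e]
  exact Finset.sum_induction _ _ (fun a b ha hb => ha.add hb) Matrix.PosSemidef.zero
    (fun j _ => gmean_block (hP j) (hQ j))

lemma gmean_mono (hX : X.PosDef) (hY : Y.PosDef) (hX' : X'.PosDef) (hY' : Y'.PosDef)
    (h1 : loewnerLE X X') (h2 : loewnerLE Y Y') :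
    loewnerLE (wgmean X Y (1/2)) (wgmean X' Y' (1/2)) := by
  apply le_gmean_of_block hX' hY' (wgmean_posDef hX hY _).1
  have hblk := gmean_block hX hY
  set G := wgmean X Y (1/2) with hG
  have eX : X + (X' - X) = X' := by abel
  have eY : Y + (Y' - Y) = Y' := by abel
  have e : Matrix.fromBlocks X' G G Y'
      = Matrix.fromBlocks X G G Y + Matrix.fromBlocks (X' - X) 0 0 (Y' - Y) := by
    rw [Matrix.fromBlocks_add, add_zero, eX, eY]
  rw [e]
  exact hblk.add (fromBlocks_psd_diag h1 h2)

lemma wgmean_zero (hM : M.PosDef) (hN : N.PosDef) : wgmean M N 0 = M := by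
  rw [wgmean, mrpow_zero (inner_posDef hM hN).1, mul_one, mrpow_add hM,
    show (1/2 + 1/2 : ℝ) = 1 by norm_num, mrpow_one hM.1]

lemma wgmean_one (hM : M.PosDef) (hN : N.PosDef) : wgmean M N 1 = N := by
  rw [wgmean, mrpow_one (inner_posDef hM hN).1, sandwich (T_mul_Ti hM) (Ti_mul_T hM)]

end blocks


section dyadic
variable {m : ℕ} {A B : Fin m → Matrix l l ℂ}

lemma superadd_dyadic (hm : 0 < m) (hA : ∀ j, (A j).PosDef) (hB : ∀ j, (B j).PosDef) :
    ∀ (n k : ℕ), k ≤ 2^n →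
      loewnerLE (∑ j, wgmean (A j) (B j) ((k : ℝ)/2^n))
        (wgmean (∑ j, A j) (∑ j, B j) ((k : ℝ)/2^n)) := by
  have hAs : (∑ j, A j).PosDef := posDef_sum hm hA
  have hBs : (∑ j, B j).PosDef := posDef_sum hm hB
  intro n
  induction n with
  | zero =>
    intro k hk
    norm_num at hk
    interval_cases k
    · have e : ((0:ℕ):ℝ)/2^(0:ℕ) = 0 := by norm_num
      rw [e]
      apply loewnerLE_of_eq
      rw [wgmean_zero hAs hBs]
      exact Finset.sum_congr rfl fun j _ => wgmean_zero (hA j) (hB j)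
    · have e : ((1:ℕ):ℝ)/2^(0:ℕ) = 1 := by norm_num
      rw [e]
      apply loewnerLE_of_eq
      rw [wgmean_one hAs hBs]
      exact Finset.sum_congr rfl fun j _ => wgmean_one (hA j) (hB j)
  | succ n ih =>
    intro k hk
    have hpow : 2^(n+1) = 2 * 2^n := by ring
    rcases Nat.even_or_odd k with ⟨j, hj⟩ | ⟨j, hj⟩
    · have hj' : j ≤ 2^n := by omega
      have et : ((k:ℝ))/2^(n+1) = (j:ℝ)/2^n := by
        subst hj
        have h2 : ((2:ℝ))^(n+1) = 2 * 2^n := by ring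
        push_cast
        rw [h2]
        have hne : ((2:ℝ))^n ≠ 0 := by positivity
        field_simp
        ring
      rw [et]
      exact ih j hj'
    · have h1 : j ≤ 2^n := by omega
      have h2 : j + 1 ≤ 2^n := by omega
      set p : ℝ := (j:ℝ)/2^n with hp
      set q : ℝ := ((j+1:ℕ):ℝ)/2^n with hq
      have et : ((k:ℝ))/2^(n+1) = (p + q)/2 := by
        subst hj
        rw [hp, hq]
        have h2' : ((2:ℝ))^(n+1) = 2 * 2^n := by ring
        push_cast
        rw [h2']
        have hne : ((2:ℝ))^n ≠ 0 := by positivity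
        field_simp
        ring
      have hptw : ∀ jj : Fin m, wgmean (A jj) (B jj) ((k:ℝ)/2^(n+1))
          = wgmean (wgmean (A jj) (B jj) p) (wgmean (A jj) (B jj) q) (1/2) := fun jj => by
        rw [et, ← gmean_wgmean (hA jj) (hB jj)]
      have step1 : loewnerLE (∑ j', wgmean (A j') (B j') ((k:ℝ)/2^(n+1)))
          (wgmean (∑ j', wgmean (A j') (B j') p) (∑ j', wgmean (A j') (B j') q) (1/2)) := by
        rw [Finset.sum_congr rfl (fun jj _ => hptw jj)]
        exact gmean_superadd hm (fun jj => wgmean_posDef (hA jj) (hB jj) p)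
          (fun jj => wgmean_posDef (hA jj) (hB jj) q)
      have step2 := gmean_mono
        (posDef_sum hm fun jj => wgmean_posDef (hA jj) (hB jj) p)
        (posDef_sum hm fun jj => wgmean_posDef (hA jj) (hB jj) q)
        (wgmean_posDef hAs hBs p) (wgmean_posDef hAs hBs q)
        (ih j h1) (ih (j+1) h2)
      have step3 : wgmean (wgmean (∑ j', A j') (∑ j', B j') p)
          (wgmean (∑ j', A j') (∑ j', B j') q) (1/2)
          = wgmean (∑ j', A j') (∑ j', B j') ((k:ℝ)/2^(n+1)) := by
        rw [gmean_wgmean hAs hBs, ← et]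
      exact loewnerLE_trans (loewnerLE_trans step1 step2) (loewnerLE_of_eq step3)

end dyadic


section continuity
variable {C M N H : Matrix l l ℂ}

lemma continuous_mrpow (hC : C.PosDef) : Continuous (fun t : ℝ => mrpow C t) := by
  have e : (fun t : ℝ => mrpow C t) = fun t =>
      (hC.1.eigenvectorUnitary : Matrix l l ℂ) *
        Matrix.diagonal (fun i => ((hC.1.eigenvalues i ^ t : ℝ) : ℂ)) *
        star (hC.1.eigenvectorUnitary : Matrix l l ℂ) := by
    funext t; rw [mrpow, dif_pos hC.1]
  rw [e]
  refine Continuous.matrix_mul (Continuous.matrix_mul continuous_const ?_) continuous_const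
  refine continuous_matrix fun i j => ?_
  by_cases hij : i = j
  · subst hij
    have ed : (fun t : ℝ => Matrix.diagonal (fun i' => ((hC.1.eigenvalues i' ^ t : ℝ) : ℂ)) i i)
        = fun t => ((hC.1.eigenvalues i ^ t : ℝ) : ℂ) := by
      funext t; rw [Matrix.diagonal_apply_eq]
    rw [ed]
    refine Complex.continuous_ofReal.comp ?_
    show Continuous fun t : ℝ => hC.1.eigenvalues i ^ t
    have e2 : (fun t : ℝ => hC.1.eigenvalues i ^ t)
        = fun t => Real.exp (Real.log (hC.1.eigenvalues i) * t) := by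
      funext t; rw [Real.rpow_def_of_pos (hC.eigenvalues_pos i)]
    rw [e2]
    exact Real.continuous_exp.comp (continuous_const.mul continuous_id)
  · have ed : (fun t : ℝ => Matrix.diagonal (fun i' => ((hC.1.eigenvalues i' ^ t : ℝ) : ℂ)) i j)
        = fun _ => 0 := by funext t; rw [Matrix.diagonal_apply_ne _ hij]
    rw [ed]
    exact continuous_const

lemma continuous_wgmean (hM : M.PosDef) (hN : N.PosDef) :
    Continuous (fun t : ℝ => wgmean M N t) := by
  show Continuous fun t : ℝ => mrpow M (1/2) *
    mrpow (mrpow M (-(1/2)) * N * mrpow M (-(1/2))) t * mrpow M (1/2)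
  exact Continuous.matrix_mul
    (Continuous.matrix_mul continuous_const (continuous_mrpow (inner_posDef hM hN)))
    continuous_const

lemma herm_qf_im (hH : H.IsHermitian) (x : l → ℂ) : (star x ⬝ᵥ (H *ᵥ x)).im = 0 := by
  have h1 : star (star x ⬝ᵥ (H *ᵥ x)) = star x ⬝ᵥ (H *ᵥ x) := by
    conv_lhs => rw [Matrix.star_dotProduct, star_star, Matrix.star_mulVec, hH.eq,
      ← Matrix.dotProduct_mulVec]
  rw [Complex.star_def] at h1
  exact Complex.conj_eq_iff_im.mp h1

lemma superadd_real {m : ℕ} (hm : 0 < m) {A B : Fin m → Matrix l l ℂ}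
    (hA : ∀ j, (A j).PosDef) (hB : ∀ j, (B j).PosDef) {s : ℝ} (hs0 : 0 ≤ s) (hs1 : s ≤ 1) :
    loewnerLE (∑ j, wgmean (A j) (B j) s) (wgmean (∑ j, A j) (∑ j, B j) s) := by
  have hAs : (∑ j, A j).PosDef := posDef_sum hm hA
  have hBs : (∑ j, B j).PosDef := posDef_sum hm hB
  set F : ℝ → Matrix l l ℂ :=
    fun t => wgmean (∑ j, A j) (∑ j, B j) t - ∑ j, wgmean (A j) (B j) t with hF
  have hFherm : ∀ t, (F t).IsHermitian := fun t =>
    ((wgmean_posDef hAs hBs t).1).sub (herm_sum fun j => (wgmean_posDef (hA j) (hB j) t).1)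
  have hFcont : Continuous F := (continuous_wgmean hAs hBs).sub
    (continuous_finset_sum _ fun j _ => continuous_wgmean (hA j) (hB j))
  refine Matrix.posSemidef_iff_dotProduct_mulVec.mpr ⟨hFherm s, fun x => ?_⟩
  show (0 : ℂ) ≤ star x ⬝ᵥ (F s *ᵥ x)
  rw [Complex.le_def]
  refine ⟨?_, by rw [Complex.zero_im, herm_qf_im (hFherm s) x]⟩
  rw [Complex.zero_re]
  set f : ℝ → ℝ := fun t => (star x ⬝ᵥ (F t *ᵥ x)).re with hf
  have hfc : Continuous f := Complex.continuous_re.comp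
    (Continuous.dotProduct continuous_const
      (Continuous.matrix_mulVec hFcont continuous_const))
  set u : ℕ → ℝ := fun n => ((⌊s * 2^n⌋₊ : ℕ) : ℝ)/2^n with hu
  have hut : Filter.Tendsto u Filter.atTop (nhds s) := by
    have h1 := tendsto_nat_floor_mul_div_atTop hs0
    have h2 : Filter.Tendsto (fun n : ℕ => ((2:ℝ))^n) Filter.atTop Filter.atTop :=
      tendsto_pow_atTop_atTop_of_one_lt one_lt_two
    exact h1.comp h2
  have hnn : ∀ n, 0 ≤ f (u n) := by
    intro n
    have hk : ⌊s * 2^n⌋₊ ≤ 2^n := by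
      have h2n : (0:ℝ) < 2^n := by positivity
      have hle : s * 2^n ≤ ((2^n : ℕ) : ℝ) := by
        push_cast
        nlinarith
      exact le_trans (Nat.floor_le_floor hle) (le_of_eq (Nat.floor_natCast _))
    have hd := superadd_dyadic hm hA hB n ⌊s * 2^n⌋₊ hk
    have h0 := hd.re_dotProduct_nonneg x
    simpa using h0
  have hlim : Filter.Tendsto (fun n => f (u n)) Filter.atTop (nhds (f s)) :=
    (hfc.continuousAt.tendsto).comp hut
  exact ge_of_tendsto' hlim hnn

end continuity

end Callebaut

open Callebaut

theorem callebaut_matrix_upper {l : Type*} [Fintype l] [DecidableEq l] (m : ℕ)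
    (A B : Fin m → Matrix l l ℂ) (hA : ∀ j, (A j).PosDef) (hB : ∀ j, (B j).PosDef)
    (s : ℝ) (hs0 : 0 ≤ s) (hs1 : s ≤ 1) :
    loewnerLE (wgmean (∑ j, wgmean (A j) (B j) s) (∑ j, wgmean (A j) (B j) (1 - s)) (1/2))
      (wgmean (∑ j, A j) (∑ j, B j) (1/2)) := by
  rcases Nat.eq_zero_or_pos m with hm | hm
  · subst hm
    simp only [Finset.univ_eq_empty, Finset.sum_empty]
    exact loewnerLE_refl _
  · have hAs : (∑ j, A j).PosDef := posDef_sum hm hA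
    have hBs : (∑ j, B j).PosDef := posDef_sum hm hB
    have h1 := gmean_mono
      (posDef_sum hm fun j => wgmean_posDef (hA j) (hB j) s)
      (posDef_sum hm fun j => wgmean_posDef (hA j) (hB j) (1 - s))
      (wgmean_posDef hAs hBs s) (wgmean_posDef hAs hBs (1 - s))
      (superadd_real hm hA hB hs0 hs1)
      (superadd_real hm hA hB (by linarith) (by linarith))
    have h2 : wgmean (wgmean (∑ j, A j) (∑ j, B j) s)
        (wgmean (∑ j, A j) (∑ j, B j) (1 - s)) (1/2)
        = wgmean (∑ j, A j) (∑ j, B j) (1/2) := by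
      rw [gmean_wgmean hAs hBs, show ((s + (1 - s))/2 : ℝ) = 1/2 by ring]
    exact loewnerLE_trans h1 (loewnerLE_of_eq h2)
end

section
/- For positive definite matrices A, B ∈ M_n(ℂ) and 0 ≤ α ≤ β ≤ 1, one has A^(1+α) ⊗ B^(1-α) + A^(1-α) ⊗ B^(1+α) ≤ A^(1+β) ⊗ B^(1-β) + A^(1-β) ⊗ B^(1+β) in the Loewner order on M_{n²}(ℂ); i.e., the function f(t) = A^(1+t) ⊗ B^(1-t) + A^(1-t) ⊗ B^(1+t) is increasing on [0,1]. -/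
open Matrix Finset
open scoped ComplexOrder

private lemma aux_scalar (r α β : ℝ) (hr : 0 < r) (h0 : 0 ≤ α) (hαβ : α ≤ β) :
    r ^ α + r ^ (-α) ≤ r ^ β + r ^ (-β) := by
  have h1 : r ^ β * r ^ (-(α+β)) = r ^ (-α) := by
    rw [← Real.rpow_add hr]; ring_nf
  have h2 : r ^ α * r ^ (-(α+β)) = r ^ (-β) := by
    rw [← Real.rpow_add hr]; ring_nf
  have huv : 0 ≤ (r ^ β - r ^ α) * (1 - r ^ (-(α+β))) := by
    rcases le_total r 1 with h | h
    · have e1 : r ^ β ≤ r ^ α := Real.rpow_le_rpow_of_exponent_ge hr h hαβ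
      have e2 : 1 ≤ r ^ (-(α+β)) :=
        Real.one_le_rpow_of_pos_of_le_one_of_nonpos hr h (by linarith)
      exact mul_nonneg_of_nonpos_of_nonpos (by linarith) (by linarith)
    · have e1 : r ^ α ≤ r ^ β := Real.rpow_le_rpow_of_exponent_le h hαβ
      have e2 : r ^ (-(α+β)) ≤ 1 := Real.rpow_le_one_of_one_le_of_nonpos h (by linarith)
      exact mul_nonneg (by linarith) (by linarith)
  nlinarith [huv, h1, h2]

private lemma aux_scalar2 (a b α β : ℝ) (ha : 0 < a) (hb : 0 < b) (h0 : 0 ≤ α) (hαβ : α ≤ β) :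
    a ^ (1+α) * b ^ (1-α) + a ^ (1-α) * b ^ (1+α) ≤
      a ^ (1+β) * b ^ (1-β) + a ^ (1-β) * b ^ (1+β) := by
  have hr : 0 < a / b := div_pos ha hb
  have e : ∀ t : ℝ, a ^ (1+t) * b ^ (1-t) + a ^ (1-t) * b ^ (1+t)
      = a * b * ((a/b) ^ t + (a/b) ^ (-t)) := by
    intro t
    have hat := (Real.rpow_pos_of_pos ha t).ne'
    have hbt := (Real.rpow_pos_of_pos hb t).ne'
    rw [show (1:ℝ)-t = 1 + (-t) by ring, Real.rpow_add ha, Real.rpow_add ha,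
      Real.rpow_add hb, Real.rpow_add hb, Real.rpow_one, Real.rpow_one,
      Real.rpow_neg ha.le, Real.rpow_neg hb.le, Real.rpow_neg hr.le,
      Real.div_rpow ha.le hb.le]
    field_simp
  rw [e α, e β]
  exact mul_le_mul_of_nonneg_left (aux_scalar (a/b) α β hr h0 hαβ)
    (mul_nonneg ha.le hb.le)

open Kronecker in
private lemma kron_conjTranspose {l : Type*} [Fintype l] [DecidableEq l]
    (A B : Matrix l l ℂ) : (A ⊗ₖ B)ᴴ = Aᴴ ⊗ₖ Bᴴ := by
  ext ⟨i, j⟩ ⟨k, m⟩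
  simp [Matrix.conjTranspose_apply, mul_comm]

open Kronecker in
theorem tensor_monotone {l : Type*} [Fintype l] [DecidableEq l]
    {A B : Matrix l l ℂ} (hA : A.PosDef) (hB : B.PosDef)
    (α β : ℝ) (h0 : 0 ≤ α) (hαβ : α ≤ β) (h1 : β ≤ 1) :
    loewnerLE (mrpow A (1 + α) ⊗ₖ mrpow B (1 - α) + mrpow A (1 - α) ⊗ₖ mrpow B (1 + α))
      (mrpow A (1 + β) ⊗ₖ mrpow B (1 - β) + mrpow A (1 - β) ⊗ₖ mrpow B (1 + β)) := by
  have hA' := hA.isHermitian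
  have hB' := hB.isHermitian
  set U : Matrix l l ℂ := (hA'.eigenvectorUnitary : Matrix l l ℂ) with hU
  set V : Matrix l l ℂ := (hB'.eigenvectorUnitary : Matrix l l ℂ) with hV
  set lam : l → ℝ := hA'.eigenvalues with hlam
  set mu : l → ℝ := hB'.eigenvalues with hmu
  set W : Matrix (l × l) (l × l) ℂ := U ⊗ₖ V with hW
  have key : ∀ r s : ℝ, mrpow A r ⊗ₖ mrpow B s =
      W * Matrix.diagonal (fun p : l × l => ((lam p.1 ^ r * mu p.2 ^ s : ℝ) : ℂ)) * Wᴴ := by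
    intro r s
    rw [mrpow, dif_pos hA', mrpow, dif_pos hB']
    rw [Matrix.mul_kronecker_mul, Matrix.mul_kronecker_mul,
      Matrix.diagonal_kronecker_diagonal]
    rw [hW, kron_conjTranspose]
    simp only [← Matrix.star_eq_conjTranspose, Unitary.coe_star, ← hU, ← hV, ← hlam, ← hmu]
    push_cast
    rfl
  have hdiff :
      (mrpow A (1 + β) ⊗ₖ mrpow B (1 - β) + mrpow A (1 - β) ⊗ₖ mrpow B (1 + β)) -
      (mrpow A (1 + α) ⊗ₖ mrpow B (1 - α) + mrpow A (1 - α) ⊗ₖ mrpow B (1 + α)) =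
      W * Matrix.diagonal (fun p : l × l =>
        (((lam p.1 ^ (1+β) * mu p.2 ^ (1-β) + lam p.1 ^ (1-β) * mu p.2 ^ (1+β)) -
          (lam p.1 ^ (1+α) * mu p.2 ^ (1-α) + lam p.1 ^ (1-α) * mu p.2 ^ (1+α)) : ℝ) : ℂ)) * Wᴴ := by
    rw [key, key, key, key]
    rw [← Matrix.add_mul, ← Matrix.add_mul, ← Matrix.sub_mul, ← Matrix.mul_add,
      ← Matrix.mul_add, ← Matrix.mul_sub]
    congr 2
    ext i j
    by_cases h : i = j <;>
      simp only [Matrix.sub_apply, Matrix.add_apply, Matrix.diagonal_apply, h, if_true, if_pos,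
        if_neg, not_false_iff, sub_zero, add_zero] <;>
    · push_cast
      ring
  rw [loewnerLE, hdiff]
  apply Matrix.PosSemidef.mul_mul_conjTranspose_same
  rw [Matrix.posSemidef_diagonal_iff]
  intro p
  rw [Complex.zero_le_real]
  have := aux_scalar2 (lam p.1) (mu p.2) α β (hA.eigenvalues_pos p.1) (hB.eigenvalues_pos p.2)
    h0 hαβ
  linarith
end

section
/- For positive definite matrices A, B ∈ M_n(ℂ) and 1/2 ≤ s ≤ t ≤ 1, one has A^s ⊗ B^(1-s) + A^(1-s) ⊗ B^s ≤ A^t ⊗ B^(1-t) + A^(1-t) ⊗ B^t in the Loewner order; in particular the function g(t) = A^t ⊗ B^(1-t) + A^(1-t) ⊗ B^t attains its minimum on [0,1] at t = 1/2. -/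
open Matrix Finset
open scoped ComplexOrder

lemma scalar_mono {a b : ℝ} (ha : 0 < a) (hb : 0 < b) {s t : ℝ} (hs : 1/2 ≤ s) (hst : s ≤ t) :
    a ^ s * b ^ (1 - s) + a ^ (1 - s) * b ^ s ≤ a ^ t * b ^ (1 - t) + a ^ (1 - t) * b ^ t := by
  have h1 : (0:ℝ) ≤ t - s := by linarith
  have h2 : (0:ℝ) ≤ s + t - 1 := by linarith
  have hsign : 0 ≤ (a ^ (t-s) - b ^ (t-s)) * (a ^ (s+t-1) - b ^ (s+t-1)) := by
    rcases le_total a b with h | h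
    · rw [← neg_mul_neg]
      exact mul_nonneg
        (neg_nonneg.mpr (sub_nonpos.mpr (Real.rpow_le_rpow ha.le h h1)))
        (neg_nonneg.mpr (sub_nonpos.mpr (Real.rpow_le_rpow ha.le h h2)))
    · exact mul_nonneg
        (sub_nonneg.mpr (Real.rpow_le_rpow hb.le h h1))
        (sub_nonneg.mpr (Real.rpow_le_rpow hb.le h h2))
  have has : a ^ s = a ^ (1-t) * a ^ (s+t-1) := by
    rw [← Real.rpow_add ha]; congr 1; ring
  have ha1s : a ^ (1-s) = a ^ (1-t) * a ^ (t-s) := by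
    rw [← Real.rpow_add ha]; congr 1; ring
  have hat : a ^ t = a ^ (1-t) * (a ^ (t-s) * a ^ (s+t-1)) := by
    rw [← Real.rpow_add ha, ← Real.rpow_add ha]; congr 1; ring
  have hbs : b ^ s = b ^ (1-t) * b ^ (s+t-1) := by
    rw [← Real.rpow_add hb]; congr 1; ring
  have hb1s : b ^ (1-s) = b ^ (1-t) * b ^ (t-s) := by
    rw [← Real.rpow_add hb]; congr 1; ring
  have hbt : b ^ t = b ^ (1-t) * (b ^ (t-s) * b ^ (s+t-1)) := by
    rw [← Real.rpow_add hb, ← Real.rpow_add hb]; congr 1; ring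
  have hp : 0 < a ^ (1-t) := Real.rpow_pos_of_pos ha _
  have hq : 0 < b ^ (1-t) := Real.rpow_pos_of_pos hb _
  rw [has, ha1s, hat, hbs, hb1s, hbt]
  nlinarith [mul_nonneg (mul_nonneg hp.le hq.le) hsign]

lemma mrpow_eq {l : Type*} [Fintype l] [DecidableEq l] {A : Matrix l l ℂ}
    (hA : A.IsHermitian) (r : ℝ) :
    mrpow A r = (hA.eigenvectorUnitary : Matrix l l ℂ) *
      Matrix.diagonal (fun i => ((hA.eigenvalues i ^ r : ℝ) : ℂ)) *
      (star hA.eigenvectorUnitary : Matrix l l ℂ) := dif_pos hA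

open Kronecker in
lemma key_mono {l : Type*} [Fintype l] [DecidableEq l]
    {A B : Matrix l l ℂ} (hA : A.PosDef) (hB : B.PosDef)
    {s t : ℝ} (hs : 1/2 ≤ s) (hst : s ≤ t) :
    loewnerLE (mrpow A s ⊗ₖ mrpow B (1 - s) + mrpow A (1 - s) ⊗ₖ mrpow B s)
        (mrpow A t ⊗ₖ mrpow B (1 - t) + mrpow A (1 - t) ⊗ₖ mrpow B t) := by
  have hA' := hA.isHermitian
  have hB' := hB.isHermitian
  set U : Matrix l l ℂ := (hA'.eigenvectorUnitary : Matrix l l ℂ) with hU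
  set V : Matrix l l ℂ := (hB'.eigenvectorUnitary : Matrix l l ℂ) with hV
  set W : Matrix (l × l) (l × l) ℂ := U ⊗ₖ V with hW
  have hWH : (star U) ⊗ₖ (star V) = Wᴴ := by
    ext p q
    simp [hW, Matrix.conjTranspose_apply, Matrix.kroneckerMap_apply,
      Matrix.star_eq_conjTranspose, star_mul', mul_comm]
  have hkron : ∀ r r' : ℝ, mrpow A r ⊗ₖ mrpow B r'
      = W * Matrix.diagonal (fun p : l × l =>
          ((hA'.eigenvalues p.1 ^ r : ℝ) : ℂ) * ((hB'.eigenvalues p.2 ^ r' : ℝ) : ℂ)) * Wᴴ := by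
    intro r r'
    rw [mrpow_eq hA', mrpow_eq hB', Matrix.mul_kronecker_mul, Matrix.mul_kronecker_mul,
      Matrix.diagonal_kronecker_diagonal, hWH, hW]
  set d : l × l → ℂ := fun p =>
    ((hA'.eigenvalues p.1 ^ t * hB'.eigenvalues p.2 ^ (1-t)
      + hA'.eigenvalues p.1 ^ (1-t) * hB'.eigenvalues p.2 ^ t
      - (hA'.eigenvalues p.1 ^ s * hB'.eigenvalues p.2 ^ (1-s)
      + hA'.eigenvalues p.1 ^ (1-s) * hB'.eigenvalues p.2 ^ s) : ℝ) : ℂ) with hdd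
  have hdiff : (mrpow A t ⊗ₖ mrpow B (1 - t) + mrpow A (1 - t) ⊗ₖ mrpow B t)
      - (mrpow A s ⊗ₖ mrpow B (1 - s) + mrpow A (1 - s) ⊗ₖ mrpow B s)
      = W * Matrix.diagonal d * Wᴴ := by
    rw [hkron t (1-t), hkron (1-t) t, hkron s (1-s), hkron (1-s) s]
    have : Matrix.diagonal d =
        Matrix.diagonal (fun p : l × l =>
          ((hA'.eigenvalues p.1 ^ t : ℝ) : ℂ) * ((hB'.eigenvalues p.2 ^ (1-t) : ℝ) : ℂ))
        + Matrix.diagonal (fun p : l × l =>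
          ((hA'.eigenvalues p.1 ^ (1-t) : ℝ) : ℂ) * ((hB'.eigenvalues p.2 ^ t : ℝ) : ℂ))
        - (Matrix.diagonal (fun p : l × l =>
          ((hA'.eigenvalues p.1 ^ s : ℝ) : ℂ) * ((hB'.eigenvalues p.2 ^ (1-s) : ℝ) : ℂ))
        + Matrix.diagonal (fun p : l × l =>
          ((hA'.eigenvalues p.1 ^ (1-s) : ℝ) : ℂ) * ((hB'.eigenvalues p.2 ^ s : ℝ) : ℂ))) := by
      rw [Matrix.diagonal_add, Matrix.diagonal_add, Matrix.diagonal_sub]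
      congr 1
      funext p
      rw [hdd]
      push_cast
      ring
    rw [this]
    simp only [Matrix.mul_add, Matrix.add_mul, Matrix.mul_sub, Matrix.sub_mul]
  have hdpsd : (Matrix.diagonal d).PosSemidef := by
    refine Matrix.posSemidef_diagonal_iff.mpr fun p => ?_
    rw [hdd]
    refine Complex.zero_le_real.mpr ?_
    have := scalar_mono (hA.eigenvalues_pos p.1) (hB.eigenvalues_pos p.2) hs hst
    linarith
  unfold loewnerLE
  rw [hdiff]
  exact hdpsd.mul_mul_conjTranspose_same W

open Kronecker in
theorem tensor_monotone_half {l : Type*} [Fintype l] [DecidableEq l]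
    {A B : Matrix l l ℂ} (hA : A.PosDef) (hB : B.PosDef)
    (s t : ℝ) (hs : 1/2 ≤ s) (hst : s ≤ t) (ht : t ≤ 1) :
    loewnerLE (mrpow A s ⊗ₖ mrpow B (1 - s) + mrpow A (1 - s) ⊗ₖ mrpow B s)
        (mrpow A t ⊗ₖ mrpow B (1 - t) + mrpow A (1 - t) ⊗ₖ mrpow B t) ∧
      ∀ u : ℝ, 0 ≤ u → u ≤ 1 →
        loewnerLE (mrpow A (1/2 : ℝ) ⊗ₖ mrpow B (1/2 : ℝ) + mrpow A (1/2 : ℝ) ⊗ₖ mrpow B (1/2 : ℝ))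
          (mrpow A u ⊗ₖ mrpow B (1 - u) + mrpow A (1 - u) ⊗ₖ mrpow B u) := by
  refine ⟨key_mono hA hB hs hst, fun u hu0 hu1 => ?_⟩
  have h12 : (1:ℝ) - 1/2 = 1/2 := by norm_num
  rcases le_total (1/2 : ℝ) u with h | h
  · have := key_mono hA hB (le_refl (1/2 : ℝ)) h
    rwa [h12] at this
  · have := key_mono hA hB (le_refl (1/2 : ℝ)) (by linarith : (1/2:ℝ) ≤ 1 - u)
    rw [h12, show (1:ℝ) - (1 - u) = u by ring] at this
    rwa [add_comm (mrpow A (1-u) ⊗ₖ mrpow B u)] at this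
end
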